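/- arXiv:2209.04858 — 6 statements merged into one kernel-verified Lean document; each statement's English description precedes it below -/
import Mathlib

section
/- Let j ≥ 1, let 0 ≤ u_0 < u_1 < ⋯ < u_j ≤ 1 be real numbers, and let n_1,…,n_j be positive integers. Then ∫_{u_0<t_1<u_1<t_2<u_2<⋯<t_j<u_j} det((t_b^{n_a})_{1≤a,b≤j}) · (dt_1/t_1)⋯(dt_j/t_j) = (1/(n_1⋯n_j)) · F(u_0,…,u_j ; n_1,…,n_j). -/
open MeasureTheory Finset
open scoped Matrix

/-- `F(t₀,…,t_j ; n₁,…,n_j)`: the determinant of the `(j+1)×(j+1)` matrix whose first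
row is `(1,…,1)` and whose `(a+1)`-st row (`1 ≤ a ≤ j`) is `(t₀^{n_a},…,t_j^{n_a})`
(indices of `t` and `n` starting from `0`). -/
noncomputable def Fdet (j : ℕ) (t : ℕ → ℝ) (n : ℕ → ℕ) : ℝ :=
  Matrix.det (Matrix.of fun a b : Fin (j + 1) =>
    if a.1 = 0 then (1 : ℝ) else t b.1 ^ n (a.1 - 1))

/-- If `r : Fin j → Bool` is "upward closed at adjacent steps", then it is a threshold
function: `r b = decide (k ≤ b)` for some `k ≤ j`. -/
lemma bool_threshold {j : ℕ} (r : Fin j → Bool)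
    (adj : ∀ a b : Fin j, a.1 + 1 = b.1 → r a = true → r b = true) :
    ∃ k : ℕ, k ≤ j ∧ ∀ b : Fin j, r b = decide (k ≤ b.1) := by
  classical
  have up : ∀ d (a b : Fin j), a.1 + d = b.1 → r a = true → r b = true := by
    intro d
    induction d with
    | zero =>
      intro a b h ha
      have : a = b := Fin.ext (by omega)
      rwa [← this]
    | succ d ih =>
      intro a b h ha
      have hc : a.1 + d < j := by omega
      exact adj ⟨a.1 + d, hc⟩ b (by simpa using by omega) (ih a ⟨a.1 + d, hc⟩ rfl ha)
  by_cases hS : ∃ a : Fin j, r a = true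
  · obtain ⟨a0, ha0⟩ := hS
    set S : Finset (Fin j) := Finset.univ.filter (fun b => r b = true) with hSdef
    have hne : S.Nonempty := ⟨a0, by simp [hSdef, ha0]⟩
    set m := S.min' hne with hm
    refine ⟨m.1, le_of_lt m.2, fun b => ?_⟩
    have hmem : r m = true := by
      have := S.min'_mem hne
      simpa [hSdef] using this
    by_cases hb : m.1 ≤ b.1
    · rw [up (b.1 - m.1) m b (by omega) hmem]
      simp [hb]
    · have hrb : r b = false := by
        by_contra h
        have hbt : r b = true := by simpa using h
        have : m ≤ b := S.min'_le b (by simp [hSdef, hbt])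
        exact hb this
      rw [hrb]
      symm
      simpa using hb
  · push_neg at hS
    refine ⟨j, le_refl j, fun b => ?_⟩
    have : r b = false := by
      cases h : r b
      · rfl
      · exact absurd h (hS b)
    rw [this]
    symm
    simpa using b.2

lemma prod_sign (j : ℕ) : ∀ k : ℕ, k ≤ j →
    (∏ b : Fin j, (if k ≤ b.1 then (1:ℝ) else -1)) = (-1)^k := by
  induction j with
  | zero =>
    intro k hk
    interval_cases k
    simp
  | succ j ih =>
    intro k hk
    rw [Fin.prod_univ_succ]
    cases k with
    | zero => simp
    | succ k =>
      have h0 : ¬ (k + 1 ≤ ((0 : Fin (j+1)) : ℕ)) := by simp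
      rw [if_neg h0]
      have hstep : ∀ b : Fin j, (if k + 1 ≤ ((Fin.succ b : Fin (j+1)) : ℕ) then (1:ℝ) else -1)
          = (if k ≤ (b : ℕ) then (1:ℝ) else -1) := by
        intro b
        simp [Fin.val_succ, Nat.succ_le_succ_iff]
      rw [Finset.prod_congr rfl (fun b _ => hstep b), ih k (Nat.succ_le_succ_iff.mp hk)]
      ring

/-- An alternating map applied to successive differences equals the alternating sum of its
values on the "one index omitted" selections. -/
lemma alt_sub_succ {j : ℕ} {M : Type*} [AddCommGroup M] [Module ℝ M]
    (f : M [⋀^Fin j]→ₗ[ℝ] ℝ) (w : Fin (j+1) → M) :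
    f (fun b => w b.succ - w b.castSucc)
      = ∑ k : Fin (j+1), (-1 : ℝ)^(k : ℕ) • f (fun b => w (k.succAbove b)) := by
  classical
  have h1 : (fun b : Fin j => w b.succ - w b.castSucc)
      = fun b => ∑ x : Bool, (if x then w b.succ else -(w b.castSucc)) := by
    funext b
    simp [Fintype.sum_bool, sub_eq_add_neg]
  have hcoe : ∀ v : Fin j → M, f v = f.toMultilinearMap v := fun _ => rfl
  rw [h1, hcoe, f.toMultilinearMap.map_sum]
  have hterm : ∀ r : Fin j → Bool,
      (f.toMultilinearMap fun b => if r b then w b.succ else -(w b.castSucc))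
        = (∏ b : Fin j, (if r b then (1:ℝ) else -1))
            • f (fun b => w (if r b then b.succ else b.castSucc)) := by
    intro r
    have hv : (fun b : Fin j => if r b then w b.succ else -(w b.castSucc))
        = fun b => (if r b then (1:ℝ) else -1) • w (if r b then b.succ else b.castSucc) := by
      funext b
      cases hrb : r b <;> simp
    rw [hv, f.toMultilinearMap.map_smul_univ]
    rfl
  rw [Finset.sum_congr rfl fun r _ => hterm r]
  set Φ : Fin (j+1) → (Fin j → Bool) := fun k b => decide ((k : ℕ) ≤ (b : ℕ)) with hΦ
  have hΦinj : Function.Injective Φ := by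
    have key : ∀ k k' : Fin (j+1), (k : ℕ) < (k' : ℕ) → Φ k ≠ Φ k' := by
      intro k k' hkk' h
      have hkj : (k : ℕ) < j := by omega
      have hb := congrFun h ⟨(k : ℕ), hkj⟩
      simp [hΦ] at hb
      omega
    intro k k' h
    rcases Nat.lt_trichotomy (k : ℕ) (k' : ℕ) with h1 | h1 | h1
    · exact absurd h (key k k' h1)
    · exact Fin.ext h1
    · exact absurd h.symm (key k' k h1)
  have hzero : ∀ r ∈ (Finset.univ : Finset (Fin j → Bool)),
      r ∉ Finset.image Φ Finset.univ →
      (∏ b : Fin j, (if r b then (1:ℝ) else -1))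
          • f (fun b => w (if r b then b.succ else b.castSucc)) = 0 := by
    intro r _ hr
    have hadj : ¬ ∀ a b : Fin j, a.1 + 1 = b.1 → r a = true → r b = true := by
      intro hadj
      obtain ⟨k, hk, hr'⟩ := bool_threshold r hadj
      refine hr (Finset.mem_image.mpr ⟨⟨k, Nat.lt_succ_of_le hk⟩, Finset.mem_univ _, ?_⟩)
      funext b
      exact (hr' b).symm
    push_neg at hadj
    obtain ⟨a, b, hab, ha, hb⟩ := hadj
    have hbf : r b = false := by simpa using hb
    have hvec : (fun c : Fin j => w (if r c then c.succ else c.castSucc)) a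
        = (fun c : Fin j => w (if r c then c.succ else c.castSucc)) b := by
      simp only [ha, hbf, if_true, if_false]
      congr 1
      exact Fin.ext (by simp [Fin.val_succ, Fin.coe_castSucc]; omega)
    have hne : a ≠ b := by
      intro h
      rw [h] at hab
      omega
    rw [f.map_eq_zero_of_eq _ hvec hne, smul_zero]
  rw [← Finset.sum_subset (Finset.subset_univ (Finset.image Φ Finset.univ)) hzero,
    Finset.sum_image (fun k _ k' _ h => hΦinj h)]
  refine Finset.sum_congr rfl fun k _ => ?_
  have hsign : (∏ b : Fin j, (if Φ k b then (1:ℝ) else -1)) = (-1 : ℝ)^(k : ℕ) := by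
    rw [← prod_sign j (k : ℕ) (Nat.lt_succ_iff.mp k.2)]
    refine Finset.prod_congr rfl fun b _ => ?_
    simp [hΦ]
  have hcr : (fun b : Fin j => w (if Φ k b then b.succ else b.castSucc))
      = fun b => w (k.succAbove b) := by
    funext b
    by_cases h : (k : ℕ) ≤ (b : ℕ)
    · rw [Fin.succAbove_of_le_castSucc k b (by rwa [Fin.le_def, Fin.coe_castSucc])]
      simp [hΦ, h]
    · rw [Fin.succAbove_of_castSucc_lt k b (by rw [Fin.lt_def, Fin.coe_castSucc]; omega)]
      simp [hΦ, h]
  rw [hsign, hcr]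

/-- The `j×j` determinant of the differences `u_{b+1}^{n_a} - u_b^{n_a}` equals
`F(u₀,…,u_j ; n₁,…,n_j)`. -/
lemma det_diff_eq_Fdet (j : ℕ) (u : ℕ → ℝ) (n : ℕ → ℕ) :
    Matrix.det (Matrix.of fun a b : Fin j => u (b.1 + 1) ^ n a.1 - u b.1 ^ n a.1)
      = Fdet j u n := by
  classical
  set w : Fin (j+1) → (Fin j → ℝ) := fun c a => u c.1 ^ n a.1 with hw
  have hM : Matrix.det (Matrix.of fun a b : Fin j => u (b.1 + 1) ^ n a.1 - u b.1 ^ n a.1)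
      = Matrix.det ((Matrix.of fun b a : Fin j => w b.succ a - w b.castSucc a)ᵀ) := by
    congr 1
  rw [hM, Matrix.det_transpose]
  have h2 : Matrix.det (Matrix.of fun b a : Fin j => w b.succ a - w b.castSucc a)
      = Matrix.detRowAlternating (R := ℝ) (n := Fin j) (fun b => w b.succ - w b.castSucc) := by
    congr 1
  rw [h2, alt_sub_succ]
  have hF : Fdet j u n = ∑ k : Fin (j+1),
      (-1 : ℝ)^(k : ℕ)
        * Matrix.det (Matrix.of fun a c : Fin j => u ((k.succAbove c) : ℕ) ^ n a.1) := by
    rw [Fdet, Matrix.det_succ_row_zero]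
    refine Finset.sum_congr rfl fun k _ => ?_
    have h0 : (Matrix.of fun a b : Fin (j + 1) =>
        if a.1 = 0 then (1 : ℝ) else u b.1 ^ n (a.1 - 1)) 0 k = 1 := by simp
    rw [h0, mul_one]
    congr 1
  rw [hF]
  refine Finset.sum_congr rfl fun k _ => ?_
  rw [smul_eq_mul]
  congr 1
  have h3 : Matrix.detRowAlternating (R := ℝ) (n := Fin j) (fun b => w (k.succAbove b))
      = Matrix.det ((Matrix.of fun a c : Fin j => u ((k.succAbove c) : ℕ) ^ n a.1)ᵀ) := by
    congr 1
  rw [h3, Matrix.det_transpose]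

/-- Type synonym used to endow each coordinate with a restricted volume. -/
def RR (j : ℕ) (_ : Fin j) : Type := ℝ

instance (j : ℕ) (i : Fin j) : MeasurableSpace (RR j i) := inferInstanceAs (MeasurableSpace ℝ)

lemma restrict_pi_pi' {j : ℕ} (s : Fin j → Set ℝ) :
    (volume : Measure (Fin j → ℝ)).restrict (Set.pi Set.univ s)
      = Measure.pi (fun i => (volume : Measure ℝ).restrict (s i)) := by
  haveI : ∀ i : Fin j, SigmaFinite ((volume : Measure ℝ).restrict (s i)) :=
    fun i => Restrict.sigmaFinite _ _
  refine (Measure.pi_eq (fun t ht => ?_)).symm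
  rw [Measure.restrict_apply (MeasurableSet.univ_pi ht), ← Set.pi_inter_distrib,
    volume_pi, Measure.pi_pi]
  exact Finset.prod_congr rfl fun i _ => (Measure.restrict_apply (ht i)).symm

lemma integrable_pi_restrict {j : ℕ} (s : Fin j → Set ℝ) (f : Fin j → ℝ → ℝ)
    (hf : ∀ i, IntegrableOn (f i) (s i)) :
    Integrable (fun x : Fin j → ℝ => ∏ i, f i (x i))
      (Measure.pi (fun i => (volume : Measure ℝ).restrict (s i))) := by
  letI : ∀ i : Fin j, MeasureSpace (RR j i) :=
    fun i => { volume := (volume : Measure ℝ).restrict (s i) }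
  haveI : ∀ i : Fin j, SigmaFinite (volume : Measure (RR j i)) :=
    fun i => Restrict.sigmaFinite (volume : Measure ℝ) (s i)
  haveI : ∀ i : Fin j, SigmaFinite ((volume : Measure ℝ).restrict (s i)) :=
    fun i => Restrict.sigmaFinite _ _
  exact MeasureTheory.Integrable.fintype_prod_dep (E := fun _ : Fin j => ℝ) (f := f) hf

lemma integral_pi_restrict {j : ℕ} (s : Fin j → Set ℝ) (f : Fin j → ℝ → ℝ) :
    (∫ x : Fin j → ℝ, ∏ i, f i (x i)
        ∂(Measure.pi (fun i => (volume : Measure ℝ).restrict (s i))))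
      = ∏ i, ∫ x in s i, f i x := by
  letI : ∀ i : Fin j, MeasureSpace (RR j i) :=
    fun i => { volume := (volume : Measure ℝ).restrict (s i) }
  haveI : ∀ i : Fin j, SigmaFinite (volume : Measure (RR j i)) :=
    fun i => Restrict.sigmaFinite (volume : Measure ℝ) (s i)
  haveI : ∀ i : Fin j, SigmaFinite ((volume : Measure ℝ).restrict (s i)) :=
    fun i => Restrict.sigmaFinite _ _
  exact MeasureTheory.integral_fintype_prod_eq_prod (E := fun _ : Fin j => ℝ) f

lemma integral_Ioo_pow (a b : ℝ) (hab : a ≤ b) (m : ℕ) (hm : 1 ≤ m) :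
    (∫ x in Set.Ioo a b, x ^ (m - 1)) = (b ^ m - a ^ m) / m := by
  rw [← MeasureTheory.integral_Ioc_eq_integral_Ioo, ← intervalIntegral.integral_of_le hab,
    integral_pow]
  have h1 : m - 1 + 1 = m := by omega
  have h2 : ((m - 1 : ℕ) : ℝ) + 1 = (m : ℝ) := by
    rw [Nat.cast_sub hm]; ring
  rw [h1, h2]

/-- **Lemma 1 (I).** For `0 ≤ u₀ < u₁ < ⋯ < u_j ≤ 1` and positive integers `n₁,…,n_j`,
`∫_{u₀<t₁<u₁<⋯<t_j<u_j} det((t_b^{n_a})_{a,b}) dt₁/t₁ ⋯ dt_j/t_j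
  = (n₁⋯n_j)⁻¹ · F(u₀,…,u_j ; n₁,…,n_j)`. -/
theorem lemma1_I (j : ℕ) (hj : 1 ≤ j) (u : ℕ → ℝ) (n : ℕ → ℕ)
    (hu0 : 0 ≤ u 0) (hum : ∀ i < j, u i < u (i + 1)) (huj : u j ≤ 1)
    (hn : ∀ i < j, 0 < n i) :
    (∫ t : Fin j → ℝ in {t | ∀ i : Fin j, u i.1 < t i ∧ t i < u (i.1 + 1)},
        Matrix.det (Matrix.of fun a b : Fin j => t b ^ n a.1) * ∏ i, (t i)⁻¹)
      = (∏ i ∈ Finset.range j, (n i : ℝ))⁻¹ * Fdet j u n := by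
  classical
  have hmono : ∀ m, m ≤ j → 0 ≤ u m := by
    intro m
    induction m with
    | zero => intro _; exact hu0
    | succ m ih =>
      intro hm
      exact le_of_lt (lt_of_le_of_lt (ih (by omega)) (hum m (by omega)))
  set s : Fin j → Set ℝ := fun i => Set.Ioo (u i.1) (u (i.1 + 1)) with hsdef
  have hsm : ∀ i, MeasurableSet (s i) := fun i => measurableSet_Ioo
  have hset : {t : Fin j → ℝ | ∀ i : Fin j, u i.1 < t i ∧ t i < u (i.1 + 1)}
      = Set.pi Set.univ s := by
    ext t
    simp [hsdef, Set.mem_pi]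
  have hcong : Set.EqOn
      (fun t : Fin j → ℝ => Matrix.det (Matrix.of fun a b : Fin j => t b ^ n a.1) * ∏ i, (t i)⁻¹)
      (fun t : Fin j → ℝ => ∑ σ : Equiv.Perm (Fin j),
        ((Equiv.Perm.sign σ : ℤ) : ℝ) * ∏ i, (t i) ^ (n (σ i).1 - 1))
      (Set.pi Set.univ s) := by
    intro t ht
    have htpos : ∀ i : Fin j, 0 < t i := by
      intro i
      have hti := ht i (Set.mem_univ i)
      exact lt_of_le_of_lt (hmono i.1 (le_of_lt i.2)) hti.1
    simp only
    rw [Matrix.det_apply', Finset.sum_mul]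
    refine Finset.sum_congr rfl fun σ _ => ?_
    rw [mul_assoc]
    congr 1
    rw [← Finset.prod_mul_distrib]
    refine Finset.prod_congr rfl fun i _ => ?_
    have hni : 1 ≤ n (σ i).1 := hn (σ i).1 (σ i).2
    have hp : t i ^ n (σ i).1 = t i ^ (n (σ i).1 - 1) * t i := by
      rw [← pow_succ]; congr 1; omega
    rw [Matrix.of_apply, hp, mul_assoc, mul_inv_cancel₀ (ne_of_gt (htpos i)), mul_one]
  rw [hset, setIntegral_congr_fun (MeasurableSet.univ_pi hsm) hcong, restrict_pi_pi' s]
  have hintg : ∀ σ : Equiv.Perm (Fin j), Integrable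
      (fun t : Fin j → ℝ => ((Equiv.Perm.sign σ : ℤ) : ℝ) * ∏ i, (t i) ^ (n (σ i).1 - 1))
      (Measure.pi (fun i => (volume : Measure ℝ).restrict (s i))) := by
    intro σ
    refine Integrable.const_mul ?_ _
    refine integrable_pi_restrict s (fun i x => x ^ (n (σ i).1 - 1)) (fun i => ?_)
    exact IntegrableOn.mono_set ((continuous_pow _).integrableOn_Icc)
      Set.Ioo_subset_Icc_self
  rw [integral_finset_sum _ (fun σ _ => hintg σ)]
  have hone : ∀ σ : Equiv.Perm (Fin j),
      (∫ t : Fin j → ℝ, ((Equiv.Perm.sign σ : ℤ) : ℝ) * ∏ i, (t i) ^ (n (σ i).1 - 1)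
          ∂(Measure.pi (fun i => (volume : Measure ℝ).restrict (s i))))
        = ((Equiv.Perm.sign σ : ℤ) : ℝ) * ((∏ i : Fin j, (n i.1 : ℝ))⁻¹
            * ∏ i : Fin j, (u (i.1 + 1) ^ n (σ i).1 - u i.1 ^ n (σ i).1)) := by
    intro σ
    rw [integral_const_mul, integral_pi_restrict s (fun i x => x ^ (n (σ i).1 - 1))]
    congr 1
    have hstep : ∀ i : Fin j, (∫ x in s i, x ^ (n (σ i).1 - 1))
        = (n (σ i).1 : ℝ)⁻¹ * (u (i.1 + 1) ^ n (σ i).1 - u i.1 ^ n (σ i).1) := by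
      intro i
      rw [show s i = Set.Ioo (u i.1) (u (i.1 + 1)) from rfl,
        integral_Ioo_pow (u i.1) (u (i.1 + 1)) (le_of_lt (hum i.1 i.2)) _ (hn (σ i).1 (σ i).2),
        div_eq_inv_mul]
    rw [Finset.prod_congr rfl (fun i _ => hstep i), Finset.prod_mul_distrib]
    congr 1
    rw [Finset.prod_inv_distrib]
    congr 1
    exact Equiv.prod_comp σ (fun i => (n i.1 : ℝ))
  rw [Finset.sum_congr rfl (fun σ _ => hone σ)]
  rw [← det_diff_eq_Fdet j u n, Matrix.det_apply', Finset.mul_sum]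
  refine Finset.sum_congr rfl fun σ _ => ?_
  have hprod : (∏ i ∈ Finset.range j, (n i : ℝ)) = ∏ i : Fin j, (n i.1 : ℝ) :=
    (Fin.prod_univ_eq_prod_range (fun i => (n i : ℝ)) j).symm
  rw [hprod]
  have hM : (∏ i : Fin j,
        (Matrix.of fun a b : Fin j => u (b.1 + 1) ^ n a.1 - u b.1 ^ n a.1) (σ i) i)
      = ∏ i : Fin j, (u (i.1 + 1) ^ n (σ i).1 - u i.1 ^ n (σ i).1) := rfl
  rw [hM]
  ring
end

section
/- Let j ≥ 1, let 0 ≤ u_0 < u_1 < ⋯ < u_j < 1 be real numbers, and let n_1,…,n_{j+1} be integers with 0 ≤ n_1 < n_2 < ⋯ < n_{j+1}. Then ∫_{u_0<t_1<u_1<t_2<u_2<⋯<t_j<u_j} det(M) · (dt_1/(1−t_1))⋯(dt_j/(1−t_j)) = Σ_{n_1<m_1≤n_2<m_2≤⋯<m_j≤n_{j+1}} (1/(m_1⋯m_j)) · F(u_0,…,u_j ; m_1,…,m_j), where M is the (j+1)×(j+1) matrix whose a-th row (1≤a≤j+1) is (t_1^{n_a}, t_2^{n_a}, …, t_j^{n_a},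 1), and the finite sum is over integer tuples (m_1,…,m_j) satisfying n_1<m_1≤n_2<m_2≤n_3<⋯≤n_j<m_j≤n_{j+1}. -/
open MeasureTheory Finset

section Helpers

lemma l1_intOn (x y : ℝ) (hy : y < 1) (k : ℕ) :
    IntegrableOn (fun t : ℝ => t ^ k * (1 - t)⁻¹) (Set.Ioo x y) := by
  rcases le_or_gt x y with h | h
  · refine (ContinuousOn.integrableOn_Icc ?_).mono_set Set.Ioo_subset_Icc_self
    refine ContinuousOn.mul (by fun_prop) (ContinuousOn.inv₀ (by fun_prop) ?_)
    intro t ht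
    have : t ≤ y := ht.2
    intro h0
    nlinarith [sub_eq_zero.mp h0]
  · rw [Set.Ioo_eq_empty (by linarith)]
    exact integrableOn_empty

lemma l1_int_pow (x y : ℝ) (h : x ≤ y) (m : ℕ) :
    ∫ t in Set.Ioo x y, t ^ m = (y ^ (m + 1) - x ^ (m + 1)) / (m + 1) := by
  rw [← integral_Ioc_eq_integral_Ioo, ← intervalIntegral.integral_of_le h,
    integral_pow]

lemma l1_diff_int (x y : ℝ) (hx : x ≤ y) (hy : y < 1) (n0 na : ℕ) (h : n0 ≤ na) :
    (∫ t in Set.Ioo x y, t ^ na * (1 - t)⁻¹) - (∫ t in Set.Ioo x y, t ^ n0 * (1 - t)⁻¹)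
      = -∑ m ∈ Finset.Ioc n0 na, (y ^ m - x ^ m) / m := by
  rw [← integral_sub (l1_intOn x y hy na) (l1_intOn x y hy n0)]
  have key : ∀ t ∈ Set.Ioo x y,
      t ^ na * (1 - t)⁻¹ - t ^ n0 * (1 - t)⁻¹ = -∑ m ∈ Finset.Ico n0 na, t ^ m := by
    intro t ht
    have ht1 : t ≠ 1 := by have := ht.2; intro hh; rw [hh] at this; linarith
    have := geom_sum_Ico ht1 h
    rw [this]
    have h2 : t - 1 ≠ 0 := sub_ne_zero.mpr ht1
    have h3 : (1:ℝ) - t ≠ 0 := by intro hh; apply ht1; linarith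
    field_simp
    ring
  rw [setIntegral_congr_fun measurableSet_Ioo key]
  rw [integral_neg]
  rw [integral_finset_sum _ (fun m _ => (continuous_pow m).continuousOn.integrableOn_Icc.mono_set
    Set.Ioo_subset_Icc_self)]
  congr 1
  rw [Finset.sum_bij' (fun m _ => m + 1) (fun m _ => m - 1)]
  · intro m hm; simp only [Finset.mem_Ico] at hm; simp only [Finset.mem_Ioc]; omega
  · intro m hm; simp only [Finset.mem_Ioc] at hm; simp only [Finset.mem_Ico]; omega
  · intro m hm; simp only [Finset.mem_Ico] at hm; omega
  · intro m hm; simp only [Finset.mem_Ioc] at hm; omega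
  · intro m hm
    rw [l1_int_pow x y hx m]
    push_cast
    ring_nf

lemma l1_mono_step {α : Type*} [Preorder α] {j : ℕ} (f : ℕ → α)
    (hf : ∀ i < j, f i ≤ f (i + 1)) : ∀ q ≤ j, ∀ p ≤ q, f p ≤ f q := by
  intro q
  induction q with
  | zero =>
    intro _ p hp
    have : p = 0 := by omega
    subst this; exact le_rfl
  | succ q ih =>
    intro hq p hp
    rcases Nat.eq_or_lt_of_le hp with rfl | hlt
    · exact le_rfl
    · exact le_trans (ih (by omega) p (by omega)) (hf q (by omega))

lemma l1_exists_step {j : ℕ} (n : ℕ → ℕ) {k : ℕ} (hk : k ≤ j) {x : ℕ}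
    (h0 : n 0 < x) (hx : x ≤ n k) : ∃ i < k, n i < x ∧ x ≤ n (i + 1) := by
  induction k with
  | zero => omega
  | succ k ih =>
    rcases le_or_gt x (n k) with h | h
    · obtain ⟨i, hi, h1, h2⟩ := ih (by omega) h
      exact ⟨i, by omega, h1, h2⟩
    · exact ⟨k, by omega, h, hx⟩

theorem l1_chain_sum {j : ℕ} (n : ℕ → ℕ) (hn : ∀ i < j, n i ≤ n (i + 1))
    (g : (Fin j → ℕ) → ℝ)
    (hswap : ∀ (i k : Fin j), i ≠ k → ∀ m : Fin j → ℕ, g (m ∘ Equiv.swap i k) = -g m) :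
    ∑ m ∈ Fintype.piFinset (fun a : Fin j => Finset.Ioc (n 0) (n (a.1 + 1))), g m
      = ∑ m ∈ Fintype.piFinset (fun a : Fin j => Finset.Ioc (n a.1) (n (a.1 + 1))), g m := by
  classical
  set B : ℕ → (Fin j → Finset ℕ) :=
    fun k a => Finset.Ioc (n (if a.1 < k then a.1 else 0)) (n (a.1 + 1)) with hB
  have mono := l1_mono_step n hn
  have step : ∀ k, ∑ m ∈ Fintype.piFinset (B k), g m
      = ∑ m ∈ Fintype.piFinset (B (k + 1)), g m := by
    intro k
    rcases le_or_gt j k with hjk | hkj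
    · have : B k = B (k + 1) := by
        funext a
        have : a.1 < j := a.2
        simp only [hB]
        rw [if_pos (by omega), if_pos (by omega)]
      rw [this]
    · set kk : Fin j := ⟨k, hkj⟩ with hkk
      rw [← Finset.sum_filter_add_sum_filter_not (Fintype.piFinset (B k))
        (fun m => m kk ≤ n k) g]
      have h2 : Finset.filter (fun m => ¬ m kk ≤ n k) (Fintype.piFinset (B k))
          = Fintype.piFinset (B (k + 1)) := by
        ext m
        simp only [Finset.mem_filter, Fintype.mem_piFinset, not_le, hB, Finset.mem_Ioc]
        constructor
        · rintro ⟨hm, hk2⟩ a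
          rcases lt_trichotomy a.1 k with h | h | h
          · have := hm a; rw [if_pos h] at this; rw [if_pos (by omega)]; exact this
          · have ha : a = kk := Fin.ext h
            subst ha
            rw [if_pos (by omega)]
            exact ⟨hk2, (hm kk).2⟩
          · have := hm a; rw [if_neg (by omega)] at this; rw [if_neg (by omega)]; exact this
        · intro hm
          constructor
          · intro a
            rcases lt_trichotomy a.1 k with h | h | h
            · have := hm a; rw [if_pos (by omega)] at this; rw [if_pos h]; exact this
            · have := hm a; rw [if_pos (by omega)] at this; rw [if_neg (by omega)]
              exact ⟨lt_of_le_of_lt (mono a.1 (by omega) 0 (by omega)) this.1, this.2⟩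
            · have := hm a; rw [if_neg (by omega)] at this; rw [if_neg (by omega)]; exact this
          · have := hm kk
            rw [if_pos (show kk.1 < k + 1 from Nat.lt_succ_self k)] at this
            exact this.1
      rw [h2]
      have h1 : ∑ m ∈ Finset.filter (fun m => m kk ≤ n k) (Fintype.piFinset (B k)), g m = 0 := by
        have hdecomp : Finset.filter (fun m => m kk ≤ n k) (Fintype.piFinset (B k))
            = (Finset.range k).biUnion (fun i =>
                Finset.filter (fun m => n i < m kk ∧ m kk ≤ n (i + 1))
                  (Fintype.piFinset (B k))) := by
          ext m
          simp only [Finset.mem_filter, Finset.mem_biUnion, Finset.mem_range]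
          constructor
          · rintro ⟨hm, hle⟩
            have h0 : n 0 < m kk := by
              have := (Fintype.mem_piFinset).mp hm kk
              simp only [hB, Finset.mem_Ioc] at this
              rcases this with ⟨h1', _⟩
              rcases lt_or_ge (kk.1) k with hc | hc
              · exact lt_of_le_of_lt (mono kk.1 (by omega) 0 (by omega))
                  (by rwa [if_pos hc] at h1')
              · rwa [if_neg (by omega)] at h1'
            obtain ⟨i, hi, hi1, hi2⟩ := l1_exists_step n (le_of_lt hkj) h0 hle
            exact ⟨i, hi, hm, hi1, hi2⟩
          · rintro ⟨i, hi, hm, hi1, hi2⟩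
            exact ⟨hm, le_trans hi2 (mono k (by omega) (i + 1) (by omega))⟩
        rw [hdecomp]
        rw [Finset.sum_biUnion]
        · apply Finset.sum_eq_zero
          intro i hi
          simp only [Finset.mem_range] at hi
          set ii : Fin j := ⟨i, by omega⟩ with hii
          have hik : ii ≠ kk := by
            simp only [hii, hkk, Ne, Fin.ext_iff]; omega
          apply Finset.sum_involution (fun m _ => m ∘ Equiv.swap ii kk)
          · intro m hm
            rw [hswap ii kk hik m]; ring
          · intro m hm hne heq
            have := hswap ii kk hik m
            rw [heq] at this
            apply hne; linarith
          · intro m hm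
            simp only [Finset.mem_filter, Fintype.mem_piFinset] at hm ⊢
            obtain ⟨hm, hmi1, hmi2⟩ := hm
            have hvi := hm ii
            simp only [hB, Finset.mem_Ioc] at hvi
            rw [if_pos (show ii.1 < k from hi)] at hvi
            constructor
            · intro a
              rcases eq_or_ne a ii with rfl | hai
              · rw [Function.comp_apply, Equiv.swap_apply_left]
                simp only [hB, Finset.mem_Ioc]
                rw [if_pos (show ii.1 < k from hi)]
                exact ⟨hmi1, hmi2⟩
              rcases eq_or_ne a kk with rfl | hak
              · rw [Function.comp_apply, Equiv.swap_apply_right]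
                simp only [hB, Finset.mem_Ioc]
                rw [if_neg (show ¬ kk.1 < k from Nat.lt_irrefl k)]
                exact ⟨lt_of_le_of_lt (mono ii.1 (by omega) 0 (by omega)) hvi.1,
                  le_trans hvi.2 (mono (k + 1) (by omega) (ii.1 + 1)
                    (Nat.succ_le_succ (Nat.le_of_lt hi)))⟩
              · rw [Function.comp_apply, Equiv.swap_apply_of_ne_of_ne hai hak]
                exact hm a
            · rw [Function.comp_apply, Equiv.swap_apply_right]
              exact ⟨hvi.1, hvi.2⟩
          · intro m hm
            funext a
            simp only [Function.comp_apply, Equiv.swap_apply_self]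
        · intro p hp q hq hpq
          simp only [Finset.mem_coe, Finset.mem_range] at hp hq
          simp only [Function.onFun]
          rw [Finset.disjoint_left]
          rintro m hm1 hm2
          simp only [Finset.mem_filter] at hm1 hm2
          obtain ⟨-, hp1, hp2⟩ := hm1
          obtain ⟨-, hq1, hq2⟩ := hm2
          rcases lt_or_gt_of_ne hpq with h | h
          · have := mono q (by omega) (p + 1) (by omega); omega
          · have := mono p (by omega) (q + 1) (by omega); omega
      rw [h1, zero_add]
  have main : ∀ k, ∑ m ∈ Fintype.piFinset (B 0), g m = ∑ m ∈ Fintype.piFinset (B k), g m := by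
    intro k
    induction k with
    | zero => rfl
    | succ k ih => rw [ih, step]
  have h0 : B 0 = fun a : Fin j => Finset.Ioc (n 0) (n (a.1 + 1)) := by
    funext a; simp [hB]
  have hjj : B j = fun a : Fin j => Finset.Ioc (n a.1) (n (a.1 + 1)) := by
    funext a; simp only [hB]; rw [if_pos a.2]
  rw [← h0, ← hjj]
  exact main j

end Helpers

lemma Fdet_eq (j : ℕ) (u : ℕ → ℝ) (m : ℕ → ℕ) :
    Fdet j u m
      = Matrix.det (Matrix.of fun a b : Fin j => u (b.1 + 1) ^ m a.1 - u b.1 ^ m a.1) := by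
  set Fm : Matrix (Fin (j + 1)) (Fin (j + 1)) ℝ :=
    Matrix.of fun a b => if a.1 = 0 then (1 : ℝ) else u b.1 ^ m (a.1 - 1) with hFm
  set F' : Matrix (Fin (j + 1)) (Fin (j + 1)) ℝ :=
    Matrix.of fun a b => if b.1 = 0 then Fm a b else Fm a b - Fm a ⟨b.1 - 1, by omega⟩ with hF'
  have h1 : Fm.det = F'.det := by
    apply Matrix.det_eq_of_forall_col_eq_smul_add_pred (fun _ => (1 : ℝ))
    · intro i
      simp [hF']
    · intro i b
      have hb : (b.succ.1 : ℕ) ≠ 0 := Nat.succ_ne_zero b.1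
      have hcast : (⟨b.succ.1 - 1, by omega⟩ : Fin (j + 1)) = b.castSucc := by
        apply Fin.ext; simp
      simp only [hF', Matrix.of_apply, if_neg hb, hcast]
      ring
  have h2 : F'.det = Matrix.det (F'.submatrix Fin.succ Fin.succ) := by
    rw [Matrix.det_succ_row_zero]
    rw [Finset.sum_eq_single (0 : Fin (j + 1))]
    · simp only [Fin.val_zero, pow_zero, one_mul, Fin.succAbove_zero]
      have : F' 0 0 = 1 := by simp [hF', hFm]
      rw [this, one_mul]
    · intro b _ hb
      have hbv : b.1 ≠ 0 := fun h => hb (Fin.ext h)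
      have : F' 0 b = 0 := by simp [hF', hFm, hbv, hb]
      rw [this]; ring
    · intro h
      exact absurd (Finset.mem_univ _) h
  rw [Fdet]
  show Fm.det = _
  rw [h1, h2]
  congr 1

/-- **Lemma 1 (III).** For `0 ≤ u₀ < ⋯ < u_j < 1` and integers `0 ≤ n₁ < ⋯ < n_{j+1}`,
`∫_{u₀<t₁<⋯<t_j<u_j} det(M) dt₁/(1-t₁) ⋯ dt_j/(1-t_j)
  = Σ_{n₁<m₁≤n₂<⋯<m_j≤n_{j+1}} (m₁⋯m_j)⁻¹ · F(u₀,…,u_j ; m₁,…,m_j)`,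
where the `a`-th row of the `(j+1)×(j+1)` matrix `M` is `(t₁^{n_a},…,t_j^{n_a},1)`
(the summation tuples are normalized by `m i = 0` for `i ≥ j`). -/
theorem lemma1_III (j : ℕ) (hj : 1 ≤ j) (u : ℕ → ℝ) (n : ℕ → ℕ)
    (hu0 : 0 ≤ u 0) (hum : ∀ i < j, u i < u (i + 1)) (huj : u j < 1)
    (hn : ∀ i < j, n i < n (i + 1)) :
    (∫ t : Fin j → ℝ in {t | ∀ i : Fin j, u i.1 < t i ∧ t i < u (i.1 + 1)},
        Matrix.det (Matrix.of fun a b : Fin (j + 1) =>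
          if h : b.1 < j then t ⟨b.1, h⟩ ^ n a.1 else 1) * ∏ i, (1 - t i)⁻¹)
      = ∑' m : {m : ℕ → ℕ // (∀ i < j, n i < m i ∧ m i ≤ n (i + 1)) ∧
            ∀ i, j ≤ i → m i = 0},
          (∏ i ∈ Finset.range j, (m.1 i : ℝ))⁻¹ * Fdet j u m.1 := by
  classical
  have umono := l1_mono_step u (fun i hi => le_of_lt (hum i hi))
  have nmono := l1_mono_step n (fun i hi => le_of_lt (hn i hi))
  -- basic facts about u on the relevant range
  have hult : ∀ b : Fin j, u (b.1 + 1) < 1 :=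
    fun b => lt_of_le_of_lt (umono j le_rfl (b.1 + 1) b.2) huj
  have hule : ∀ b : Fin j, u b.1 ≤ u (b.1 + 1) :=
    fun b => le_of_lt (hum b.1 b.2)
  -- the region as a product set
  set S : Set (Fin j → ℝ) := Set.univ.pi fun i : Fin j => Set.Ioo (u i.1) (u (i.1 + 1))
    with hS
  have hSm : MeasurableSet S := MeasurableSet.univ_pi fun i => measurableSet_Ioo
  have hSet : {t : Fin j → ℝ | ∀ i : Fin j, u i.1 < t i ∧ t i < u (i.1 + 1)} = S := by
    ext t
    simp [hS, Set.mem_pi, Set.mem_Ioo, Set.mem_setOf_eq]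
  -- the matrix of integrals
  set A : Matrix (Fin (j + 1)) (Fin (j + 1)) ℝ :=
    Matrix.of fun a b => if h : b.1 < j then
      ∫ t in Set.Ioo (u b.1) (u (b.1 + 1)), t ^ n a.1 * (1 - t)⁻¹ else 1 with hA
  -- Step 1 : the integral equals det A
  have step1 : (∫ t : Fin j → ℝ in {t | ∀ i : Fin j, u i.1 < t i ∧ t i < u (i.1 + 1)},
        Matrix.det (Matrix.of fun a b : Fin (j + 1) =>
          if h : b.1 < j then t ⟨b.1, h⟩ ^ n a.1 else 1) * ∏ i, (1 - t i)⁻¹) = A.det := by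
    rw [hSet, ← integral_indicator hSm]
    have hpoint : (S.indicator fun t : Fin j → ℝ =>
        Matrix.det (Matrix.of fun a b : Fin (j + 1) =>
          if h : b.1 < j then t ⟨b.1, h⟩ ^ n a.1 else 1) * ∏ i, (1 - t i)⁻¹)
        = fun t => ∑ σ : Equiv.Perm (Fin (j + 1)), ((Equiv.Perm.sign σ : ℤ) : ℝ) *
            ∏ i : Fin j, (Set.Ioo (u i.1) (u (i.1 + 1))).indicator
              (fun s => s ^ n ((σ i.castSucc)).1 * (1 - s)⁻¹) (t i) := by
      funext t
      by_cases ht : t ∈ S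
      · rw [Set.indicator_of_mem ht]
        have hti : ∀ i : Fin j, t i ∈ Set.Ioo (u i.1) (u (i.1 + 1)) := by
          intro i
          exact ht i (Set.mem_univ i)
        rw [Matrix.det_apply', Finset.sum_mul]
        refine Finset.sum_congr rfl fun σ _ => ?_
        rw [mul_assoc]
        congr 1
        rw [Fin.prod_univ_castSucc]
        have hlast : (Matrix.of fun a b : Fin (j + 1) =>
            if h : b.1 < j then t ⟨b.1, h⟩ ^ n a.1 else 1) (σ (Fin.last j)) (Fin.last j)
            = 1 := by
          simp only [Matrix.of_apply, Fin.val_last]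
          rw [dif_neg (lt_irrefl j)]
        rw [hlast, mul_one, ← Finset.prod_mul_distrib]
        refine Finset.prod_congr rfl fun i _ => ?_
        rw [Set.indicator_of_mem (hti i)]
        simp only [Matrix.of_apply]
        rw [dif_pos (show (i.castSucc).1 < j from i.2)]
        congr 1
      · rw [Set.indicator_of_notMem ht]
        symm
        apply Finset.sum_eq_zero
        intro σ _
        have : ∃ i : Fin j, t i ∉ Set.Ioo (u i.1) (u (i.1 + 1)) := by
          by_contra hcon
          push_neg at hcon
          exact ht fun i _ => hcon i
        obtain ⟨i0, hi0⟩ := this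
        rw [Finset.prod_eq_zero (Finset.mem_univ i0) (Set.indicator_of_notMem hi0 _)]
        ring
    rw [hpoint]
    rw [integral_finset_sum _ (fun σ _ => by
      refine (Integrable.fintype_prod (f := fun (i : Fin j) (s : ℝ) =>
        (Set.Ioo (u i.1) (u (i.1 + 1))).indicator
          (fun s => s ^ n ((σ i.castSucc)).1 * (1 - s)⁻¹) s) (fun i => ?_)).const_mul _
      rw [integrable_indicator_iff measurableSet_Ioo]
      exact l1_intOn _ _ (hult i) _)]
    rw [Matrix.det_apply']
    refine Finset.sum_congr rfl fun σ _ => ?_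
    rw [MeasureTheory.integral_const_mul]
    congr 1
    rw [integral_fintype_prod_volume_eq_prod (f := fun (i : Fin j) (s : ℝ) =>
      (Set.Ioo (u i.1) (u (i.1 + 1))).indicator
        (fun s => s ^ n ((σ i.castSucc)).1 * (1 - s)⁻¹) s)]
    rw [Fin.prod_univ_castSucc]
    have hAl : A (σ (Fin.last j)) (Fin.last j) = 1 := by
      simp only [hA, Matrix.of_apply, Fin.val_last]
      rw [dif_neg (lt_irrefl j)]
    rw [hAl, mul_one]
    refine Finset.prod_congr rfl fun i _ => ?_
    rw [integral_indicator measurableSet_Ioo]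
    simp only [hA, Matrix.of_apply]
    rw [dif_pos (show (i.castSucc).1 < j from i.2)]
    rfl
  -- Step 2 : det A equals det T
  set T : Matrix (Fin j) (Fin j) ℝ :=
    Matrix.of fun a b => ∑ m ∈ Finset.Ioc (n 0) (n (a.1 + 1)),
      ((m : ℝ))⁻¹ * (u (b.1 + 1) ^ m - u b.1 ^ m) with hT
  have step2 : A.det = T.det := by
    set A' : Matrix (Fin (j + 1)) (Fin (j + 1)) ℝ :=
      Matrix.of fun a b => if a.1 = 0 then A a b else A a b - A 0 b with hA'
    have e1 : A.det = A'.det := by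
      apply Matrix.det_eq_of_forall_row_eq_smul_add_const
        (fun a => if a.1 = 0 then 0 else 1) 0 (by simp)
      intro a b
      by_cases ha : a.1 = 0
      · have : a = 0 := Fin.ext ha
        subst this
        simp [hA']
      · simp only [hA', Matrix.of_apply, if_neg ha]
        rw [if_pos (show ((0 : Fin (j + 1)) : ℕ) = 0 by simp)]
        ring
    have hA'0 : ∀ b, A' 0 b = A 0 b := by
      intro b; simp [hA']
    have e2 : A'.det = (-1 : ℝ) ^ j * Matrix.det (A'.submatrix Fin.succ Fin.castSucc) := by
      rw [Matrix.det_succ_column A' (Fin.last j)]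
      rw [Finset.sum_eq_single (0 : Fin (j + 1))]
      · have h00 : A' 0 (Fin.last j) = 1 := by
          rw [hA'0]
          simp only [hA, Matrix.of_apply, Fin.val_last]
          rw [dif_neg (lt_irrefl j)]
        rw [h00]
        simp only [Fin.val_zero, Fin.val_last, zero_add, mul_one, Fin.succAbove_zero,
          Fin.succAbove_last]
      · intro b _ hb
        have hbv : b.1 ≠ 0 := fun h => hb (Fin.ext h)
        have : A' b (Fin.last j) = 0 := by
          simp only [hA', Matrix.of_apply, if_neg hbv, hA, Fin.val_last]
          rw [dif_neg (lt_irrefl j), dif_neg (lt_irrefl j)]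
          ring
        rw [this]
        ring
      · intro h
        exact absurd (Finset.mem_univ _) h
    have e3 : A'.submatrix Fin.succ Fin.castSucc = (-1 : ℝ) • T := by
      ext a b
      have hav : (a.succ.1 : ℕ) ≠ 0 := Nat.succ_ne_zero a.1
      simp only [Matrix.submatrix_apply, hA', Matrix.of_apply, if_neg hav]
      have hcs : (b.castSucc.1 : ℕ) = b.1 := rfl
      rw [show A a.succ b.castSucc = ∫ t in Set.Ioo (u b.1) (u (b.1 + 1)),
            t ^ n (a.1 + 1) * (1 - t)⁻¹ by
          simp only [hA, Matrix.of_apply]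
          rw [dif_pos (show (b.castSucc).1 < j from b.2)]
          rfl,
        show A 0 b.castSucc = ∫ t in Set.Ioo (u b.1) (u (b.1 + 1)),
            t ^ n 0 * (1 - t)⁻¹ by
          simp only [hA, Matrix.of_apply]
          rw [dif_pos (show (b.castSucc).1 < j from b.2)]
          rfl]
      rw [l1_diff_int (u b.1) (u (b.1 + 1)) (hule b) (hult b) (n 0) (n (a.1 + 1))
        (nmono (a.1 + 1) a.2 0 (Nat.zero_le _))]
      simp only [Matrix.smul_apply, hT, Matrix.of_apply, smul_eq_mul, neg_one_mul, neg_inj]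
      refine Finset.sum_congr rfl fun m _ => ?_
      rw [div_eq_inv_mul]
    rw [e1, e2, e3, Matrix.det_smul]
    simp only [Fintype.card_fin, smul_eq_mul]
    rw [← mul_assoc, ← mul_pow]
    norm_num
  -- Step 3 : multilinear expansion of det T
  set w : ℕ → (Fin j → ℝ) := fun m b => u (b.1 + 1) ^ m - u b.1 ^ m with hw
  have step3 : T.det = ∑ r ∈ Fintype.piFinset (fun a : Fin j =>
      Finset.Ioc (n 0) (n (a.1 + 1))),
        (∏ a : Fin j, ((r a : ℝ))⁻¹) *
          Matrix.det (Matrix.of fun a b : Fin j => w (r a) b) := by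
    have hrows : (T : Matrix (Fin j) (Fin j) ℝ)
        = fun a => ∑ m ∈ Finset.Ioc (n 0) (n (a.1 + 1)), ((m : ℝ))⁻¹ • w m := by
      funext a b
      simp only [hT, Matrix.of_apply, Finset.sum_apply, Pi.smul_apply, smul_eq_mul, hw]
    show Matrix.detRowAlternating T = _
    rw [hrows]
    have hms := (Matrix.detRowAlternating (R := ℝ) (n := Fin j)).toMultilinearMap.map_sum_finset
      (fun (a : Fin j) (m : ℕ) => ((m : ℝ))⁻¹ • w m) (fun a => Finset.Ioc (n 0) (n (a.1 + 1)))
    simp only [AlternatingMap.coe_multilinearMap] at hms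
    rw [hms]
    refine Finset.sum_congr rfl fun r _ => ?_
    have hsm := (Matrix.detRowAlternating (R := ℝ) (n := Fin j)).toMultilinearMap.map_smul_univ
      (fun a : Fin j => ((r a : ℝ))⁻¹) (fun a => w (r a))
    simp only [AlternatingMap.coe_multilinearMap] at hsm
    rw [hsm]
    simp only [smul_eq_mul]
    rfl
  -- Step 4 : antisymmetrization
  have step4 : ∑ r ∈ Fintype.piFinset (fun a : Fin j =>
      Finset.Ioc (n 0) (n (a.1 + 1))),
        (∏ a : Fin j, ((r a : ℝ))⁻¹) *
          Matrix.det (Matrix.of fun a b : Fin j => w (r a) b)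
      = ∑ r ∈ Fintype.piFinset (fun a : Fin j =>
      Finset.Ioc (n a.1) (n (a.1 + 1))),
        (∏ a : Fin j, ((r a : ℝ))⁻¹) *
          Matrix.det (Matrix.of fun a b : Fin j => w (r a) b) := by
    apply l1_chain_sum n (fun i hi => le_of_lt (hn i hi))
    intro i k hik r
    have hprod : ∏ a : Fin j, (((r ∘ Equiv.swap i k) a : ℝ))⁻¹
        = ∏ a : Fin j, ((r a : ℝ))⁻¹ :=
      Equiv.prod_comp (Equiv.swap i k) (fun a => ((r a : ℝ))⁻¹)
    rw [hprod]
    have hdet : Matrix.det (Matrix.of fun a b : Fin j => w ((r ∘ Equiv.swap i k) a) b)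
        = - Matrix.det (Matrix.of fun a b : Fin j => w (r a) b) := by
      have := Matrix.det_permute (Equiv.swap i k)
        (Matrix.of fun a b : Fin j => w (r a) b)
      rw [Equiv.Perm.sign_swap hik] at this
      have heq : (Matrix.of fun a b : Fin j => w (r a) b).submatrix (Equiv.swap i k) id
          = Matrix.of fun a b : Fin j => w ((r ∘ Equiv.swap i k) a) b := by
        ext a b
        simp [Matrix.submatrix_apply]
      rw [heq] at this
      rw [this]
      simp
    rw [hdet]
    ring
  -- Step 5 : identify the right-hand side
  have step5 : (∑' m : {m : ℕ → ℕ // (∀ i < j, n i < m i ∧ m i ≤ n (i + 1)) ∧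
            ∀ i, j ≤ i → m i = 0},
          (∏ i ∈ Finset.range j, (m.1 i : ℝ))⁻¹ * Fdet j u m.1)
      = ∑ r ∈ Fintype.piFinset (fun a : Fin j =>
      Finset.Ioc (n a.1) (n (a.1 + 1))),
        (∏ a : Fin j, ((r a : ℝ))⁻¹) *
          Matrix.det (Matrix.of fun a b : Fin j => w (r a) b) := by
    set C : Finset (Fin j → ℕ) :=
      Fintype.piFinset (fun a : Fin j => Finset.Ioc (n a.1) (n (a.1 + 1))) with hC
    set ex : (Fin j → ℕ) → (ℕ → ℕ) := fun r i => if h : i < j then r ⟨i, h⟩ else 0 with hex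
    have hexr : ∀ (r : Fin j → ℕ) (a : Fin j), ex r a.1 = r a := by
      intro r a
      simp only [hex]
      rw [dif_pos a.2]
    set e : {x // x ∈ C} ≃ {m : ℕ → ℕ // (∀ i < j, n i < m i ∧ m i ≤ n (i + 1)) ∧
        ∀ i, j ≤ i → m i = 0} :=
      { toFun := fun c => ⟨ex c.1, by
          constructor
          · intro i hi
            have := (Fintype.mem_piFinset).mp c.2 ⟨i, hi⟩
            simp only [Finset.mem_Ioc] at this
            rw [show ex c.1 i = c.1 ⟨i, hi⟩ from by simp only [hex]; rw [dif_pos hi]]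
            exact this
          · intro i hi
            simp only [hex]
            rw [dif_neg (by omega)]⟩
        invFun := fun m => ⟨fun a => m.1 a.1, by
          rw [Fintype.mem_piFinset]
          intro a
          simp only [Finset.mem_Ioc]
          exact m.2.1 a.1 a.2⟩
        left_inv := by
          rintro ⟨r, hr⟩
          apply Subtype.ext
          funext a
          simp only
          exact hexr r a
        right_inv := by
          rintro ⟨m, hm⟩
          apply Subtype.ext
          funext i
          simp only [hex]
          by_cases hi : i < j
          · rw [dif_pos hi]
          · rw [dif_neg hi]
            exact (hm.2 i (by omega)).symm }
    rw [← Equiv.tsum_eq e]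
    have : ∀ c : {x // x ∈ C},
        (∏ i ∈ Finset.range j, (((e c).1 i : ℝ)))⁻¹ * Fdet j u (e c).1
        = (∏ a : Fin j, ((c.1 a : ℝ))⁻¹) *
            Matrix.det (Matrix.of fun a b : Fin j => w (c.1 a) b) := by
      rintro ⟨r, hr⟩
      have hval : (e ⟨r, hr⟩).1 = ex r := rfl
      rw [hval]
      congr 1
      · rw [← Fin.prod_univ_eq_prod_range (fun i => ((ex r i : ℝ)))]
        rw [← Finset.prod_inv_distrib]
        refine Finset.prod_congr rfl fun a _ => ?_
        rw [hexr r a]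
      · rw [Fdet_eq]
        congr 1
        ext a b
        simp only [Matrix.of_apply, hw]
        rw [hexr r a]
    calc ∑' c : {x // x ∈ C}, (∏ i ∈ Finset.range j, (((e c).1 i : ℝ)))⁻¹ * Fdet j u (e c).1
        = ∑' c : {x // x ∈ C}, (∏ a : Fin j, ((c.1 a : ℝ))⁻¹) *
            Matrix.det (Matrix.of fun a b : Fin j => w (c.1 a) b) := by
          exact tsum_congr this
      _ = ∑ r ∈ C, (∏ a : Fin j, ((r a : ℝ))⁻¹) *
            Matrix.det (Matrix.of fun a b : Fin j => w (r a) b) :=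
          C.tsum_subtype (fun r => (∏ a : Fin j, ((r a : ℝ))⁻¹) *
            Matrix.det (Matrix.of fun a b : Fin j => w (r a) b))
  rw [step1, step2, step3, step4, step5]
end

section
/- Let j ≥ 1, let n_1,…,n_j be integers with 1 ≤ n_1 < n_2 < ⋯ < n_j, and let 0 ≤ u_0 ≤ u_1 ≤ ⋯ ≤ u_j ≤ 1 be real numbers. Then ∫_{D(u_0,…,u_j)} F(0,t_1,…,t_j ; n_1,…,n_j) · (dt_1/t_1)⋯(dt_j/t_j) = (1/(n_1⋯n_j)) · F(u_0,…,u_j ; n_1,…,n_j). -/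
open MeasureTheory

lemma integral_det_pi {j : ℕ} (s : Fin j → Set ℝ) (hs : ∀ b, MeasurableSet (s b))
    (g : Fin j → ℝ → ℝ) (hg : ∀ a b, IntegrableOn (g a) (s b)) :
    (∫ x : Fin j → ℝ in Set.pi Set.univ s, Matrix.det (Matrix.of fun a b => g a (x b)))
      = Matrix.det (Matrix.of fun a b => ∫ y in s b, g a y) := by
  have hmeas : MeasurableSet (Set.pi Set.univ s) := MeasurableSet.univ_pi hs
  have hint : ∀ a b, Integrable (Set.indicator (s b) (g a)) := fun a b =>
    (integrable_indicator_iff (hs b)).2 (hg a b)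
  rw [← integral_indicator hmeas]
  have hind : ∀ x : Fin j → ℝ,
      Set.indicator (Set.pi Set.univ s)
        (fun x => Matrix.det (Matrix.of fun a b => g a (x b))) x
      = Matrix.det (Matrix.of fun a b => Set.indicator (s b) (g a) (x b)) := by
    intro x
    by_cases hx : x ∈ Set.pi Set.univ s
    · rw [Set.indicator_of_mem hx]
      congr 1; ext a b
      simp [Set.indicator_of_mem (hx b (Set.mem_univ b))]
    · rw [Set.indicator_of_notMem hx]
      rw [Set.mem_pi] at hx; push_neg at hx
      obtain ⟨b, _, hb⟩ := hx
      symm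
      apply Matrix.det_eq_zero_of_column_eq_zero b
      intro a; simp [Set.indicator_of_notMem hb]
  simp_rw [hind, Matrix.det_apply, Matrix.of_apply, Units.smul_def, zsmul_eq_mul]
  rw [integral_finset_sum]
  · refine Finset.sum_congr rfl fun σ _ => ?_
    rw [MeasureTheory.integral_const_mul]
    congr 1
    rw [MeasureTheory.integral_fintype_prod_volume_eq_prod (ι := Fin j)
      (fun b => Set.indicator (s b) (g (σ b)))]
    refine Finset.prod_congr rfl fun b _ => ?_
    rw [integral_indicator (hs b)]
  · intro σ _
    exact ((Integrable.fintype_prod_dep (fun b => hint (σ b) b))).const_mul _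

lemma lemA {j : ℕ} (n : ℕ → ℕ) (hn1 : ∀ a < j, 1 ≤ n a) (t : Fin j → ℝ) :
    Fdet j (fun i => if i = 0 then (0 : ℝ) else
        if h : i - 1 < j then t ⟨i - 1, h⟩ else 0) n
      = Matrix.det (Matrix.of fun a b : Fin j => t b ^ n a) := by
  rw [Fdet, Matrix.det_succ_column_zero]
  rw [Finset.sum_eq_single 0]
  · simp only [Matrix.of_apply, Fin.val_zero, if_pos rfl, pow_zero]
    norm_num
    congr 1
    ext a b
    simp only [Matrix.submatrix_apply, Matrix.of_apply, Fin.zero_succAbove, Fin.val_succ,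
      Nat.add_sub_cancel]
    rw [if_neg (Fin.succ_ne_zero a), if_neg (Fin.succ_ne_zero b), dif_pos b.isLt]
  · intro i _ hi
    have hi1 : i.1 ≠ 0 := fun h => hi (Fin.ext h)
    have hni : n (i.1 - 1) ≠ 0 := by
      have := hn1 (i.1 - 1) (by omega); omega
    simp [Matrix.of_apply, if_neg hi1, zero_pow hni, hi]
  · intro h; exact absurd (Finset.mem_univ 0) h

lemma lemB {j : ℕ} (n : ℕ → ℕ) (u : ℕ → ℝ) :
    Fdet j u n
      = Matrix.det (Matrix.of fun a b : Fin j => u (b.1 + 1) ^ n a - u b.1 ^ n a) := by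
  classical
  set A : Matrix (Fin (j+1)) (Fin (j+1)) ℝ := Matrix.of fun a b =>
    if a.1 = 0 then (1 : ℝ) else u b.1 ^ n (a.1 - 1) with hA
  set S : Matrix (Fin (j+1)) (Fin (j+1)) ℝ := Matrix.of fun c b =>
    (if c = b then (1 : ℝ) else 0) + (if c.1 + 1 = b.1 then -1 else 0) with hS
  have hSut : ∀ (c b : Fin (j+1)), b < c → S c b = 0 := by
    intro c b hcb
    have h1 : c ≠ b := fun h => absurd h.symm (ne_of_lt hcb)
    have h2 : c.1 + 1 ≠ b.1 := by have := hcb; rw [Fin.lt_def] at this; omega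
    simp [hS, h1, h2]
  have hdetS : S.det = 1 := by
    rw [Matrix.det_of_upperTriangular hSut]
    simp [hS]
  have key : Fdet j u n = (A * S).det := by
    rw [Matrix.det_mul, hdetS, mul_one]; rfl
  rw [key]
  -- compute A * S
  have hAS : ∀ (a b : Fin (j+1)), (A * S) a b =
      A a b - (if h : b.1 = 0 then 0 else A a ⟨b.1 - 1, by omega⟩) := by
    intro a b
    rw [Matrix.mul_apply]
    have : ∀ c, A a c * S c b = (if c = b then A a b else 0) +
        (if c.1 + 1 = b.1 then -(A a c) else 0) := by
      intro c
      simp only [hS, Matrix.of_apply, mul_add]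
      congr 1
      · split
        · subst ‹c = b›; ring
        · ring
      · split <;> ring
    simp_rw [this, Finset.sum_add_distrib, Finset.sum_ite_eq' Finset.univ b]
    simp only [Finset.mem_univ, if_true]
    congr 1
    by_cases hb : b.1 = 0
    · rw [dif_pos hb, Finset.sum_eq_zero
        (fun c _ => if_neg (by omega : ¬(c.1 + 1 = b.1)))]
      norm_num
    · rw [dif_neg hb]
      rw [Finset.sum_eq_single (⟨b.1 - 1, by omega⟩ : Fin (j+1))]
      · rw [if_pos (show b.1 - 1 + 1 = b.1 by omega)]
      · intro c _ hc
        rw [if_neg]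
        intro h
        apply hc
        apply Fin.ext
        simp; omega
      · intro h; exact absurd (Finset.mem_univ _) h
  -- row 0 of A*S is (1,0,...,0)
  rw [Matrix.det_succ_row_zero]
  rw [Finset.sum_eq_single 0]
  · have h00 : (A * S) 0 0 = 1 := by
      rw [hAS]; simp [hA]
    rw [h00]
    simp only [Fin.val_zero, pow_zero, one_mul, mul_one]
    congr 1
    ext a b
    simp only [Matrix.submatrix_apply, Fin.zero_succAbove]
    rw [hAS]
    have hb1 : (b.succ : Fin (j+1)).1 = b.1 + 1 := rfl
    have ha1 : (a.succ : Fin (j+1)).1 = a.1 + 1 := rfl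
    rw [dif_neg (by omega)]
    simp only [hA, Matrix.of_apply, ha1, hb1]
    rw [if_neg (by omega)]
    simp only [Nat.add_sub_cancel]
    norm_num
  · intro b _ hb
    have hb1 : b.1 ≠ 0 := fun h => hb (Fin.ext h)
    have : (A * S) 0 b = 0 := by
      rw [hAS, dif_neg hb1]
      simp [hA]
    rw [this]; ring
  · intro h; exact absurd (Finset.mem_univ 0) h

/-- **Lemma 2, first identity.** For integers `1 ≤ n₁ < ⋯ < n_j` and reals
`0 ≤ u₀ ≤ ⋯ ≤ u_j ≤ 1`,
`∫_{D(u₀,…,u_j)} F(0,t₁,…,t_j ; n₁,…,n_j) dt₁/t₁ ⋯ dt_j/t_j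
  = (n₁⋯n_j)⁻¹ · F(u₀,…,u_j ; n₁,…,n_j)`. -/
theorem lemma2_1 (j : ℕ) (hj : 1 ≤ j) (n : ℕ → ℕ) (u : ℕ → ℝ)
    (hn0 : 0 < n 0) (hn : ∀ i, i + 1 < j → n i < n (i + 1))
    (hu0 : 0 ≤ u 0) (hum : ∀ i < j, u i ≤ u (i + 1)) (huj : u j ≤ 1) :
    (∫ t : Fin j → ℝ in {t | ∀ i : Fin j, u i.1 < t i ∧ t i < u (i.1 + 1)},
        Fdet j (fun i => if i = 0 then (0 : ℝ) else
          if h : i - 1 < j then t ⟨i - 1, h⟩ else 0) n * ∏ i, (t i)⁻¹)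
      = (∏ i ∈ Finset.range j, (n i : ℝ))⁻¹ * Fdet j u n := by
  classical
  have hn1 : ∀ a < j, 1 ≤ n a := by
    intro a
    induction a with
    | zero => intro _; exact hn0
    | succ a ih => intro ha; have := hn a ha; have := ih (by omega); omega
  have hu : ∀ i ≤ j, 0 ≤ u i := by
    intro i
    induction i with
    | zero => intro _; exact hu0
    | succ i ih =>
        intro hi
        exact le_trans (ih (by omega)) (hum i (by omega))
  set s : Fin j → Set ℝ := fun b => Set.Ioo (u b.1) (u (b.1 + 1)) with hs_def
  have hset : {t : Fin j → ℝ | ∀ i : Fin j, u i.1 < t i ∧ t i < u (i.1 + 1)}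
      = Set.pi Set.univ s := by
    ext t; simp [hs_def, Set.mem_pi, Set.mem_Ioo]
  -- pointwise rewrite of the integrand
  have hpt : ∀ t : Fin j → ℝ,
      Fdet j (fun i => if i = 0 then (0 : ℝ) else
          if h : i - 1 < j then t ⟨i - 1, h⟩ else 0) n * ∏ i, (t i)⁻¹
      = Matrix.det (Matrix.of fun a b : Fin j => (t b)⁻¹ * t b ^ n a) := by
    intro t
    rw [lemA n hn1 t, Matrix.det_mul_row (fun b => (t b)⁻¹) (fun a b : Fin j => t b ^ n a)]
    exact mul_comm _ _
  simp_rw [hset, hpt]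
  -- integrability on each interval
  have hint : ∀ a b : Fin j, IntegrableOn (fun x : ℝ => x⁻¹ * x ^ n a) (s b) := by
    intro a b
    have h1 : IntegrableOn (fun x : ℝ => x ^ (n a - 1)) (s b) := by
      have := (intervalIntegral.intervalIntegrable_pow (μ := volume)
        (a := u b.1) (b := u (b.1 + 1)) (n a - 1)).1
      exact this.mono_set Set.Ioo_subset_Ioc_self
    refine h1.congr_fun ?_ measurableSet_Ioo
    intro x hx
    have hx0 : 0 < x := lt_of_le_of_lt (hu b.1 (by omega)) hx.1
    have hna : n a.1 - 1 + 1 = n a.1 := Nat.sub_add_cancel (hn1 a.1 a.isLt)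
    show x ^ (n a.1 - 1) = x⁻¹ * x ^ n a.1
    conv_rhs => rw [← hna, pow_succ]
    field_simp
  rw [integral_det_pi s (fun b => measurableSet_Ioo) _ hint]
  -- compute the one-dimensional integrals
  have hone : ∀ a b : Fin j, (∫ y in s b, y⁻¹ * y ^ n a)
      = (n a : ℝ)⁻¹ * (u (b.1 + 1) ^ n a - u b.1 ^ n a) := by
    intro a b
    have hna : n a - 1 + 1 = n a := Nat.sub_add_cancel (hn1 a.1 a.isLt)
    have hcong : ∫ y in s b, y⁻¹ * y ^ n a = ∫ y in s b, y ^ (n a - 1) := by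
      refine setIntegral_congr_fun measurableSet_Ioo ?_
      intro x hx
      have hx0 : 0 < x := lt_of_le_of_lt (hu b.1 (by omega)) hx.1
      show x⁻¹ * x ^ n a.1 = x ^ (n a.1 - 1)
      conv_lhs => rw [← hna, pow_succ]
      field_simp
    rw [hcong, hs_def]
    rw [← MeasureTheory.integral_Ioc_eq_integral_Ioo,
      ← intervalIntegral.integral_of_le (hum b.1 b.isLt), integral_pow]
    rw [hna]
    have hc : ((n a.1 - 1 : ℕ) : ℝ) + 1 = (n a.1 : ℝ) := by
      rw [Nat.cast_sub (hn1 a.1 a.isLt)]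
      push_cast
      ring
    rw [hc, div_eq_inv_mul]
  have hfin : (Matrix.of fun a b : Fin j => ∫ y in s b, y⁻¹ * y ^ n a.1).det
      = (∏ a : Fin j, ((n a.1 : ℝ))⁻¹)
        * (Matrix.of fun a b : Fin j => u (b.1 + 1) ^ n a.1 - u b.1 ^ n a.1).det := by
    rw [← Matrix.det_mul_column (fun a : Fin j => ((n a.1 : ℝ))⁻¹)]
    congr 1
    ext a b
    exact hone a b
  rw [hfin, Finset.prod_inv_distrib, Fin.prod_univ_eq_prod_range (fun i => (n i : ℝ)) j,
    ← lemB]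
end

section
/- Let j ≥ 1, let n_1,…,n_j be integers with 1 ≤ n_1 < n_2 < ⋯ < n_j, and let 0 ≤ u_0 ≤ u_1 ≤ ⋯ ≤ u_j ≤ 1 be real numbers. Then ∫_{D(u_0,…,u_j)} F(t_1,…,t_j,1 ; n_1,…,n_j) · (dt_1/(1−t_1))⋯(dt_j/(1−t_j)) = Σ_{(m_1,…,m_j)} (1/(m_1⋯m_j)) · F(u_0,…,u_j ; m_1,…,m_j), where the finite sum is over all integer tuples (m_1,…,m_j) satisfying 0 < m_1 ≤ n_1 < m_2 ≤ n_2 < ⋯ ≤ n_{j−1} < m_j ≤ n_j (i.e. (m_1,…,m_j) ∈ X(0,n_1,…,n_j)). -/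
open MeasureTheory Finset

/-- Integral of a determinant whose columns depend on separate variables. -/
theorem int_det {k : ℕ} (F : Fin k → Fin k → ℝ → ℝ) (hF : ∀ a c, Integrable (F a c)) :
    ∫ t : Fin k → ℝ, Matrix.det (Matrix.of fun a c => F a c (t c))
      = Matrix.det (Matrix.of fun a c => ∫ x : ℝ, F a c x) := by
  simp_rw [Matrix.det_apply, Matrix.of_apply]
  simp_rw [Units.smul_def, zsmul_eq_mul]
  rw [integral_finset_sum]
  · refine Finset.sum_congr rfl fun σ _ => ?_
    rw [MeasureTheory.integral_const_mul]
    congr 1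
    exact MeasureTheory.integral_fintype_prod_eq_prod (ι := Fin k) (f := fun c => F (σ c) c)
  · intro σ _
    exact (Integrable.fintype_prod (f := fun c => F (σ c) c) (fun c => hF _ _)).const_mul _

theorem int_det_box {k : ℕ} (F : Fin k → Fin k → ℝ → ℝ) (s : Fin k → Set ℝ)
    (hs : ∀ c, MeasurableSet (s c)) (hF : ∀ a c, IntegrableOn (F a c) (s c)) :
    ∫ t : Fin k → ℝ in Set.univ.pi s, Matrix.det (Matrix.of fun a c => F a c (t c))
      = Matrix.det (Matrix.of fun a c => ∫ x : ℝ in s c, F a c x) := by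
  rw [← integral_indicator (MeasurableSet.univ_pi hs)]
  have key : ∀ t : Fin k → ℝ, (Set.univ.pi s).indicator
      (fun t : Fin k → ℝ => Matrix.det (Matrix.of fun a c => F a c (t c))) t
      = Matrix.det (Matrix.of fun a c => (s c).indicator (F a c) (t c)) := by
    intro t
    by_cases h : t ∈ Set.univ.pi s
    · rw [Set.indicator_of_mem h]
      congr 1
      ext a c
      simp only [Matrix.of_apply]
      rw [Set.indicator_of_mem (h c (Set.mem_univ c))]
    · rw [Set.indicator_of_notMem h]
      rw [Set.mem_univ_pi] at h
      push_neg at h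
      obtain ⟨c, hc⟩ := h
      symm
      apply Matrix.det_eq_zero_of_column_eq_zero c
      intro a
      simp only [Matrix.of_apply]
      exact Set.indicator_of_notMem hc _
  simp_rw [key]
  rw [int_det _ (fun a c => (hF a c).integrable_indicator (hs c))]
  congr 1
  ext a c
  simp only [Matrix.of_apply]
  exact integral_indicator (hs c)

theorem stepA {k : ℕ} (n : ℕ → ℕ) (t : Fin k → ℝ) (ht : ∀ i, t i ≠ 1) :
    Fdet k (fun i => if h : i < k then t ⟨i, h⟩ else 1) n * ∏ i, (1 - t i)⁻¹
      = Matrix.det (Matrix.of fun a c : Fin k => ∑ i ∈ Finset.range (n a.1), t c ^ i) := by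
  set t' : ℕ → ℝ := fun i => if h : i < k then t ⟨i, h⟩ else 1 with ht'
  set M : Matrix (Fin (k+1)) (Fin (k+1)) ℝ :=
    Matrix.of (fun a b : Fin (k+1) => if a.1 = 0 then (1:ℝ) else t' b.1 ^ n (a.1 - 1)) with hM
  have hFdet : Fdet k t' n = M.det := rfl
  set E : Matrix (Fin (k+1)) (Fin (k+1)) ℝ :=
    Matrix.of (fun b c : Fin (k+1) => (if b = c then (1:ℝ) else 0) +
      (if b = Fin.last k then -1 else 0) * (if c.1 < k then 1 else 0)) with hE
  have hdetE : E.det = 1 := by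
    rw [Matrix.det_of_lowerTriangular E]
    · refine Finset.prod_eq_one fun i _ => ?_
      simp only [E, Matrix.of_apply, if_pos rfl]
      rcases eq_or_ne i (Fin.last k) with h | h
      · simp [h]
      · simp [h]
    · intro i j hij
      have hij' : i < j := hij
      have h1 : i ≠ j := ne_of_lt hij'
      have h2 : i ≠ Fin.last k := by
        intro h; rw [h] at hij'; exact absurd hij' (not_lt.mpr (Fin.le_last j))
      simp [E, h1, h2]
  have hME : M * E = Matrix.of (fun a c : Fin (k+1) =>
      M a c + (if c.1 < k then -M a (Fin.last k) else 0)) := by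
    ext a c
    rw [Matrix.mul_apply]
    simp only [E, Matrix.of_apply]
    simp_rw [mul_add, Finset.sum_add_distrib]
    congr 1
    · simp [mul_ite, Finset.sum_ite_eq']
    · have hterm : ∀ b : Fin (k+1), M a b * ((if b = Fin.last k then (-1:ℝ) else 0)
          * (if c.1 < k then 1 else 0))
          = if b = Fin.last k then (-M a (Fin.last k)) * (if c.1 < k then (1:ℝ) else 0) else 0 := by
        intro b
        rcases eq_or_ne b (Fin.last k) with h | h
        · subst h; simp
        · simp [h]
      rw [Finset.sum_congr rfl (fun b _ => hterm b),
        Finset.sum_ite_eq' Finset.univ (Fin.last k)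
          (fun b => (-M a (Fin.last k)) * (if c.1 < k then (1:ℝ) else 0))]
      rcases lt_or_ge c.1 k with h | h
      · simp [h]
      · simp [not_lt.mpr h, Nat.not_lt.mpr h]
  have hdetM : M.det = (-1:ℝ)^k * Matrix.det (Matrix.of fun a c : Fin k =>
      t c ^ n a.1 - 1) := by
    have h1 : M.det = (M * E).det := by rw [Matrix.det_mul, hdetE, mul_one]
    rw [h1, hME, Matrix.det_succ_row_zero]
    rw [Finset.sum_eq_single (Fin.last k)]
    · have hentry : (Matrix.of (fun a c : Fin (k+1) =>
          M a c + (if c.1 < k then -M a (Fin.last k) else 0))) 0 (Fin.last k) = 1 := by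
        simp [M, Fin.last]
      rw [hentry, mul_one, Fin.val_last]
      congr 1
      · refine congrArg Matrix.det ?_
        ext a c
        have hsa : (Fin.last k).succAbove c = c.castSucc := by
          rw [Fin.succAbove_last]
        simp only [Matrix.submatrix_apply, hsa, Matrix.of_apply]
        have hcast : (c.castSucc : Fin (k+1)).1 = c.1 := rfl
        have hc : c.1 < k := c.2
        have hsucc : (a.succ : Fin (k+1)).1 = a.1 + 1 := rfl
        simp only [hcast, hc, if_pos, M, Matrix.of_apply, hsucc]
        have h0 : a.1 + 1 ≠ 0 := Nat.succ_ne_zero _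
        rw [if_neg h0]
        have h1 : t' c.1 = t c := by simp only [t', dif_pos hc]
        have h2 : t' ((Fin.last k : Fin (k+1)) : ℕ) = 1 := by
          simp only [t', Fin.val_last, dif_neg (lt_irrefl k)]
        rw [h1, h2, one_pow, Nat.add_sub_cancel]
        rw [ite_self]
        ring
    · intro c _ hc
      have hck : c.1 < k := by
        rcases lt_or_eq_of_le (Nat.lt_succ_iff.mp c.2) with h | h
        · exact h
        · exact absurd (Fin.ext h : c = Fin.last k) hc
      have hentry : (Matrix.of (fun a c : Fin (k+1) =>
          M a c + (if c.1 < k then -M a (Fin.last k) else 0))) 0 c = 0 := by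
        simp [M, hck]
      rw [hentry]
      ring
    · intro h
      exact absurd (Finset.mem_univ _) h
  have hprod : (∏ i, (1 - t i)⁻¹) * Matrix.det (Matrix.of fun a c : Fin k =>
      t c ^ n a.1 - 1) = Matrix.det (Matrix.of fun a c : Fin k =>
      (1 - t c)⁻¹ * (t c ^ n a.1 - 1)) := by
    exact (Matrix.det_mul_row (fun c => (1 - t c)⁻¹) (Matrix.of fun a c : Fin k => t c ^ n a.1 - 1)).symm
  rw [hFdet, hdetM, mul_assoc,
    mul_comm (Matrix.det (Matrix.of fun a c : Fin k => t c ^ n a.1 - 1)), hprod]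
  have hgeom : ∀ (a c : Fin k), (1 - t c)⁻¹ * (t c ^ n a.1 - 1)
      = -(∑ i ∈ Finset.range (n a.1), t c ^ i) := by
    intro a c
    have hne : (1 : ℝ) - t c ≠ 0 := sub_ne_zero.mpr (Ne.symm (ht c))
    rw [← geom_sum_mul (t c) (n a.1)]
    field_simp
    ring
  have : Matrix.det (Matrix.of fun a c : Fin k => (1 - t c)⁻¹ * (t c ^ n a.1 - 1))
      = (-1:ℝ)^k * Matrix.det (Matrix.of fun a c : Fin k =>
          ∑ i ∈ Finset.range (n a.1), t c ^ i) := by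
    have h1 : (Matrix.of fun a c : Fin k => (1 - t c)⁻¹ * (t c ^ n a.1 - 1))
        = -(Matrix.of fun a c : Fin k => ∑ i ∈ Finset.range (n a.1), t c ^ i) := by
      ext a c
      simp only [Matrix.of_apply, Matrix.neg_apply]
      exact hgeom a c
    rw [h1, Matrix.det_neg, Fintype.card_fin]
  rw [this, ← mul_assoc, ← mul_pow, neg_mul_neg, one_mul, one_pow, one_mul]

theorem oneD (N : ℕ) (a b : ℝ) (hab : a ≤ b) :
    ∫ x in Set.Ioo a b, (∑ i ∈ Finset.range N, x ^ i)
      = ∑ m ∈ Finset.Ioc 0 N, (b ^ m - a ^ m) / m := by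
  rw [← integral_Ioc_eq_integral_Ioo, ← intervalIntegral.integral_of_le hab]
  rw [intervalIntegral.integral_finset_sum
    (fun i _ => intervalIntegral.intervalIntegrable_pow i)]
  rw [show Finset.Ioc 0 N = Finset.map ⟨fun i => i + 1, add_left_injective 1⟩
      (Finset.range N) from ?_]
  · rw [Finset.sum_map]
    refine Finset.sum_congr rfl fun i _ => ?_
    simp only [Function.Embedding.coeFn_mk]
    rw [integral_pow]
    push_cast
    ring
  · ext m
    simp only [Finset.mem_Ioc, Finset.mem_map, Finset.mem_range, Function.Embedding.coeFn_mk]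
    constructor
    · rintro ⟨h1, h2⟩; exact ⟨m - 1, by omega, by omega⟩
    · rintro ⟨i, hi, rfl⟩; omega

/-- The index finsets for rows: row 0 gets `{0}`, row `a ≥ 1` gets `Ioc (n (a-2)) (n (a-1))`. -/
def idxF (j : ℕ) (n : ℕ → ℕ) : Fin (j + 1) → Finset ℕ := fun a =>
  if a.1 = 0 then {0} else Finset.Ioc (if a.1 - 1 = 0 then 0 else n (a.1 - 2)) (n (a.1 - 1))

/-- Extend a tuple indexed by `Fin (j+1)` (ignoring index `0`) to `ℕ → ℕ`. -/
def extm (j : ℕ) (f : Fin (j + 1) → ℕ) : ℕ → ℕ :=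
  fun i => if h : i + 1 < j + 1 then f ⟨i + 1, h⟩ else 0

theorem memcond (j : ℕ) (hj : 1 ≤ j) (n : ℕ → ℕ) : ∀ (m : ℕ → ℕ),
    (0 < m 0 ∧ (∀ i < j, m i ≤ n i) ∧
      (∀ i, i + 1 < j → n i < m (i + 1)) ∧ ∀ i, j ≤ i → m i = 0) →
    ∀ a : Fin (j+1), (if a.1 = 0 then 0 else m (a.1 - 1)) ∈ idxF j n a := by
  rintro m ⟨h1, h2, h3, h4⟩ a
  unfold idxF
  rcases Nat.eq_zero_or_pos a.1 with h | h
  · simp [h]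
  · rw [if_neg (Nat.pos_iff_ne_zero.mp h), if_neg (Nat.pos_iff_ne_zero.mp h)]
    rw [Finset.mem_Ioc]
    have ha : a.1 - 1 < j := by omega
    rcases Nat.eq_zero_or_pos (a.1 - 1) with h' | h'
    · rw [h', if_pos rfl]
      exact ⟨h1, h2 0 hj⟩
    · rw [if_neg (Nat.pos_iff_ne_zero.mp h')]
      refine ⟨?_, h2 _ ha⟩
      have := h3 (a.1 - 2) (by omega)
      rwa [(by omega : a.1 - 2 + 1 = a.1 - 1)] at this

def eqvPS (j : ℕ) (hj : 1 ≤ j) (n : ℕ → ℕ) :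
    (∀ a : Fin (j+1), {x // x ∈ idxF j n a}) ≃
      {m : ℕ → ℕ // 0 < m 0 ∧ (∀ i < j, m i ≤ n i) ∧
        (∀ i, i + 1 < j → n i < m (i + 1)) ∧ ∀ i, j ≤ i → m i = 0} where
  toFun g := ⟨extm j (fun a => (g a : ℕ)), by
    have hmem : ∀ (i : ℕ) (h : i + 1 < j + 1),
        (g ⟨i + 1, h⟩ : ℕ) ∈ Finset.Ioc (if i = 0 then 0 else n (i - 1)) (n i) := by
      intro i h
      have := (g ⟨i + 1, h⟩).2
      unfold idxF at this
      simpa using this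
    refine ⟨?_, ?_, ?_, ?_⟩
    · have h0 : 0 + 1 < j + 1 := by omega
      unfold extm
      simp only [dif_pos h0]
      have := hmem 0 h0
      simp only [if_pos rfl, Finset.mem_Ioc] at this
      exact this.1
    · intro i hi
      unfold extm
      simp only [dif_pos (by omega : i + 1 < j + 1)]
      have := hmem i (by omega)
      rw [Finset.mem_Ioc] at this
      exact this.2
    · intro i hi
      unfold extm
      simp only [dif_pos (by omega : (i + 1) + 1 < j + 1)]
      have := hmem (i + 1) (by omega)
      rw [if_neg (Nat.succ_ne_zero i), Finset.mem_Ioc] at this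
      simpa using this.1
    · intro i hi
      unfold extm
      simp only [dif_neg (by omega : ¬ i + 1 < j + 1)]⟩
  invFun m := fun a => ⟨if a.1 = 0 then 0 else m.1 (a.1 - 1), memcond j hj n m.1 m.2 a⟩
  left_inv g := by
    funext a
    apply Subtype.ext
    simp only [extm]
    rcases Nat.eq_zero_or_pos a.1 with h | h
    · rw [if_pos h]
      have h2 := (g a).2
      unfold idxF at h2
      simp only [if_pos h, Finset.mem_singleton] at h2
      omega
    · rw [if_neg (Nat.pos_iff_ne_zero.mp h), dif_pos (by omega : (a.1 - 1) + 1 < j + 1)]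
      exact congrArg (fun b => ((g b : ℕ)))
        (Fin.ext (show a.1 - 1 + 1 = a.1 by omega) :
          (⟨a.1 - 1 + 1, by omega⟩ : Fin (j+1)) = a)
  right_inv m := by
    apply Subtype.ext
    funext i
    simp only [extm]
    by_cases h : i + 1 < j + 1
    · simp only [dif_pos h]
      simp
    · simp only [dif_neg h]
      exact (m.2.2.2.2 i (by omega)).symm

theorem eqvPS_apply_val (j : ℕ) (hj : 1 ≤ j) (n : ℕ → ℕ)
    (g : ∀ a : Fin (j+1), {x // x ∈ idxF j n a}) :
    ((eqvPS j hj n g : {m : ℕ → ℕ // 0 < m 0 ∧ (∀ i < j, m i ≤ n i) ∧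
        (∀ i, i + 1 < j → n i < m (i + 1)) ∧ ∀ i, j ≤ i → m i = 0}) : ℕ → ℕ)
      = extm j (fun a => (g a : ℕ)) := rfl

theorem stepC (j : ℕ) (hj : 1 ≤ j) (n : ℕ → ℕ) (u : ℕ → ℝ) :
    (∑' m : {m : ℕ → ℕ // 0 < m 0 ∧ (∀ i < j, m i ≤ n i) ∧
          (∀ i, i + 1 < j → n i < m (i + 1)) ∧ ∀ i, j ≤ i → m i = 0},
        (∏ i ∈ Finset.range j, (m.1 i : ℝ))⁻¹ * Fdet j u m.1)
      = ∑ r ∈ Fintype.piFinset (idxF j n),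
          (∏ a : Fin (j+1), (if a.1 = 0 then 1 else ((r a : ℝ))⁻¹))
            * Fdet j u (extm j r) := by
  set S := {m : ℕ → ℕ // 0 < m 0 ∧ (∀ i < j, m i ≤ n i) ∧
          (∀ i, i + 1 < j → n i < m (i + 1)) ∧ ∀ i, j ≤ i → m i = 0} with hS
  haveI : Fintype S := Fintype.ofEquiv _ (eqvPS j hj n)
  rw [tsum_eq_sum (s := Finset.univ) (fun b hb => absurd (Finset.mem_univ b) hb)]
  refine Finset.sum_bij'
    (i := fun (m : S) (_ : m ∈ Finset.univ) =>
      fun a : Fin (j+1) => if a.1 = 0 then 0 else m.1 (a.1 - 1))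
    (j := fun r hr => eqvPS j hj n (fun a => ⟨r a, Fintype.mem_piFinset.mp hr a⟩))
    (fun m _ => Fintype.mem_piFinset.mpr (memcond j hj n m.1 m.2))
    (fun r hr => Finset.mem_univ _) ?_ ?_ ?_
  · intro m _
    apply Subtype.ext
    rw [eqvPS_apply_val]
    funext i
    unfold extm
    by_cases h : i + 1 < j + 1
    · simp only [dif_pos h]
      simp
    · simp only [dif_neg h]
      exact (m.2.2.2.2 i (by omega)).symm
  · intro r hr
    funext a
    show (if a.1 = 0 then 0 else extm j (fun a => r a) (a.1 - 1)) = r a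
    rcases Nat.eq_zero_or_pos a.1 with h | h
    · rw [if_pos h]
      have h2 := Fintype.mem_piFinset.mp hr a
      unfold idxF at h2
      simp only [if_pos h, Finset.mem_singleton] at h2
      omega
    · rw [if_neg (Nat.pos_iff_ne_zero.mp h)]
      unfold extm
      simp only [dif_pos (by omega : (a.1 - 1) + 1 < j + 1)]
      exact congrArg r (Fin.ext (show a.1 - 1 + 1 = a.1 by omega) :
        (⟨a.1 - 1 + 1, by omega⟩ : Fin (j+1)) = a)
  · intro m _
    congr 1
    · rw [Fin.prod_univ_succ]
      have h0 : (if ((0 : Fin (j+1)) : ℕ) = 0 then (1:ℝ)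
          else ((if ((0 : Fin (j+1)) : ℕ) = 0 then 0 else m.1 (((0:Fin (j+1)):ℕ) - 1) : ℕ) : ℝ)⁻¹)
          = 1 := if_pos rfl
      rw [h0, one_mul, ← Finset.prod_inv_distrib,
        ← Fin.prod_univ_eq_prod_range (fun i => ((m.1 i : ℝ))⁻¹) j]
      refine Finset.prod_congr rfl fun i _ => ?_
      simp [Fin.val_succ]
    · congr 1
      funext i
      unfold extm
      by_cases h : i + 1 < j + 1
      · simp only [dif_pos h]
        show m.1 i = (if (i + 1) = 0 then 0 else m.1 ((i+1) - 1))
        rw [if_neg (Nat.succ_ne_zero i), Nat.add_sub_cancel]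
      · simp only [dif_neg h]
        exact (m.2.2.2.2 i (by omega))

theorem stepC2 (j : ℕ) (n : ℕ → ℕ) (u : ℕ → ℝ) :
    ∑ r ∈ Fintype.piFinset (idxF j n),
        (∏ a : Fin (j+1), (if a.1 = 0 then 1 else ((r a : ℝ))⁻¹)) * Fdet j u (extm j r)
      = Matrix.det (Matrix.of fun a b : Fin (j+1) =>
          if a.1 = 0 then (1:ℝ)
          else ∑ x ∈ Finset.Ioc (if a.1 - 1 = 0 then 0 else n (a.1 - 2)) (n (a.1 - 1)),
            ((x:ℝ))⁻¹ * u b.1 ^ x) := by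
  classical
  set g : Fin (j+1) → ℕ → (Fin (j+1) → ℝ) :=
    fun a x => fun b => if a.1 = 0 then 1 else (x:ℝ)⁻¹ * u b.1 ^ x with hg
  have hrows : (Matrix.of fun a b : Fin (j+1) =>
      if a.1 = 0 then (1:ℝ)
      else ∑ x ∈ Finset.Ioc (if a.1 - 1 = 0 then 0 else n (a.1 - 2)) (n (a.1 - 1)),
        ((x:ℝ))⁻¹ * u b.1 ^ x)
      = fun a => ∑ x ∈ idxF j n a, g a x := by
    funext a b
    rw [Finset.sum_apply]
    by_cases h : a.1 = 0
    · simp [idxF, h, g, (Fin.ext h : a = 0)]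
    · simp only [Matrix.of_apply, if_neg h, idxF, g]
  rw [show Matrix.det (Matrix.of fun a b : Fin (j+1) =>
      if a.1 = 0 then (1:ℝ)
      else ∑ x ∈ Finset.Ioc (if a.1 - 1 = 0 then 0 else n (a.1 - 2)) (n (a.1 - 1)),
        ((x:ℝ))⁻¹ * u b.1 ^ x)
      = Matrix.detRowAlternating (fun a => ∑ x ∈ idxF j n a, g a x) by rw [← hrows]; rfl]
  rw [show (Matrix.detRowAlternating (fun a => ∑ x ∈ idxF j n a, g a x) : ℝ)
      = Matrix.detRowAlternating.toMultilinearMap (fun a => ∑ x ∈ idxF j n a, g a x) from rfl]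
  rw [MultilinearMap.map_sum_finset Matrix.detRowAlternating.toMultilinearMap g (idxF j n)]
  refine Finset.sum_congr rfl fun r _ => ?_
  have hsplit : (fun a => g a (r a)) = fun a : Fin (j+1) =>
      (if a.1 = 0 then (1:ℝ) else ((r a : ℝ))⁻¹)
        • (fun b : Fin (j+1) => if a.1 = 0 then (1:ℝ) else u b.1 ^ (r a)) := by
    funext a b
    by_cases h : a = 0 <;> simp [g, h]
  rw [hsplit, MultilinearMap.map_smul_univ]
  rw [smul_eq_mul]
  congr 1
  symm
  show Matrix.detRowAlternating
      (fun a : Fin (j+1) => fun b : Fin (j+1) => if a.1 = 0 then (1:ℝ) else u b.1 ^ (r a))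
    = Fdet j u (extm j r)
  unfold Fdet
  congr 1
  funext a b
  by_cases h : a.1 = 0
  · simp [h, (Fin.ext h : a = 0)]
  · simp only [Matrix.of_apply, if_neg h]
    congr 1
    unfold extm
    rw [dif_pos (by omega : (a.1 - 1) + 1 < j + 1)]
    exact congrArg r (Fin.ext (show a.1 - 1 + 1 = a.1 by omega) :
      (⟨a.1 - 1 + 1, by omega⟩ : Fin (j+1)) = a).symm

theorem telescope (j : ℕ) (n : ℕ → ℕ) (hn : ∀ i, i + 1 < j → n i < n (i + 1))
    (f : ℕ → ℝ) : ∀ p, p < j →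
    ∑ i ∈ Finset.range (p + 1), (∑ x ∈ Finset.Ioc (if i = 0 then 0 else n (i - 1)) (n i), f x)
      = ∑ x ∈ Finset.Ioc 0 (n p), f x := by
  intro p
  induction p with
  | zero => intro _; simp
  | succ q ih =>
      intro hq
      rw [Finset.sum_range_succ, ih (by omega)]
      rw [if_neg (Nat.succ_ne_zero q), Nat.add_sub_cancel]
      exact Finset.sum_Ioc_consecutive f (Nat.zero_le _) (le_of_lt (hn q hq))

theorem stepD (j : ℕ) (hj : 1 ≤ j) (n : ℕ → ℕ) (hn : ∀ i, i + 1 < j → n i < n (i + 1))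
    (u : ℕ → ℝ) :
    Matrix.det (Matrix.of fun a b : Fin (j+1) =>
        if a.1 = 0 then (1:ℝ)
        else ∑ x ∈ Finset.Ioc (if a.1 - 1 = 0 then 0 else n (a.1 - 2)) (n (a.1 - 1)),
          ((x:ℝ))⁻¹ * u b.1 ^ x)
      = Matrix.det (Matrix.of fun a b : Fin (j+1) =>
          if a.1 = 0 then (1:ℝ)
          else ∑ x ∈ Finset.Ioc 0 (n (a.1 - 1)), ((x:ℝ))⁻¹ * u b.1 ^ x) := by
  classical
  set M : Matrix (Fin (j+1)) (Fin (j+1)) ℝ := Matrix.of (fun a b : Fin (j+1) =>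
    if a.1 = 0 then (1:ℝ)
    else ∑ x ∈ Finset.Ioc (if a.1 - 1 = 0 then 0 else n (a.1 - 2)) (n (a.1 - 1)),
      ((x:ℝ))⁻¹ * u b.1 ^ x) with hM
  set L : Matrix (Fin (j+1)) (Fin (j+1)) ℝ := Matrix.of (fun a b : Fin (j+1) =>
    if (a.1 = 0 ∧ b.1 = 0) ∨ (1 ≤ b.1 ∧ b.1 ≤ a.1) then (1:ℝ) else 0) with hL
  have hdetL : L.det = 1 := by
    rw [Matrix.det_of_lowerTriangular L]
    · refine Finset.prod_eq_one fun i _ => ?_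
      rcases Nat.eq_zero_or_pos i.1 with h | h
      · simp [L, h, (Fin.ext h : i = 0)]
      · simp only [L, Matrix.of_apply]
        rw [if_pos (Or.inr ⟨h, le_refl _⟩)]
    · intro a b hab
      have hab' : a.1 < b.1 := hab
      simp only [L, Matrix.of_apply]
      rw [if_neg]
      rintro (⟨h1, h2⟩ | ⟨h1, h2⟩) <;> omega
  have hLM : L * M = Matrix.of (fun a b : Fin (j+1) =>
      if a.1 = 0 then (1:ℝ)
      else ∑ x ∈ Finset.Ioc 0 (n (a.1 - 1)), ((x:ℝ))⁻¹ * u b.1 ^ x) := by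
    ext a c
    rw [Matrix.mul_apply]
    rcases Nat.eq_zero_or_pos a.1 with h | h
    · have : ∀ b : Fin (j+1), L a b * M b c = if b = 0 then M b c else 0 := by
        intro b
        rcases eq_or_ne b 0 with hb | hb
        · subst hb
          simp only [L, Matrix.of_apply]
          rw [if_pos (Or.inl ⟨h, rfl⟩), one_mul]
          simp
        · have hb' : b.1 ≠ 0 := fun hh => hb (Fin.ext hh)
          simp only [L, Matrix.of_apply]
          rw [if_neg (by rintro (⟨h1, h2⟩ | ⟨h1, h2⟩) <;> omega), zero_mul, if_neg hb]
      rw [Finset.sum_congr rfl (fun b _ => this b), Finset.sum_ite_eq' Finset.univ 0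
        (fun b => M b c)]
      simp only [Finset.mem_univ, if_true, Matrix.of_apply]
      simp [M, h]
    · have hterm : ∀ b : Fin (j+1), L a b * M b c
          = if 1 ≤ b.1 ∧ b.1 ≤ a.1 then
              (fun k : ℕ => ∑ x ∈ Finset.Ioc (if k - 1 = 0 then 0 else n (k - 2)) (n (k - 1)),
                ((x:ℝ))⁻¹ * u c.1 ^ x) b.1
            else 0 := by
        intro b
        by_cases hb : 1 ≤ b.1 ∧ b.1 ≤ a.1
        · simp only [L, M, Matrix.of_apply]
          rw [if_pos (Or.inr hb), one_mul, if_neg (by omega), if_pos hb]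
        · simp only [L, M, Matrix.of_apply]
          rw [if_neg (by rintro (⟨h1, h2⟩ | ⟨h1, h2⟩) <;> omega), zero_mul, if_neg hb]
      rw [Finset.sum_congr rfl (fun b _ => hterm b)]
      rw [Fin.sum_univ_eq_sum_range (fun k => if 1 ≤ k ∧ k ≤ a.1 then
        (fun k : ℕ => ∑ x ∈ Finset.Ioc (if k - 1 = 0 then 0 else n (k - 2)) (n (k - 1)),
          ((x:ℝ))⁻¹ * u c.1 ^ x) k else 0) (j+1)]
      simp_rw [← Finset.mem_Icc]
      rw [Finset.sum_ite_mem (Finset.range (j+1)) (Finset.Icc 1 a.1)]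
      have hinter : Finset.range (j+1) ∩ Finset.Icc 1 a.1 = Finset.Icc 1 a.1 := by
        apply Finset.inter_eq_right.mpr
        intro x hx
        rw [Finset.mem_Icc] at hx
        rw [Finset.mem_range]
        have := a.2
        omega
      rw [hinter]
      rw [show Finset.Icc 1 a.1 = Finset.map ⟨fun i => i + 1, add_left_injective 1⟩
          (Finset.range a.1) from ?_]
      · rw [Finset.sum_map]
        simp only [Function.Embedding.coeFn_mk, Nat.add_sub_cancel]
        have ha1 : a.1 - 1 < j := by have := a.2; omega
        have := telescope j n hn (fun x => ((x:ℝ))⁻¹ * u c.1 ^ x) (a.1 - 1) ha1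
        rw [show a.1 - 1 + 1 = a.1 by omega] at this
        rw [Matrix.of_apply, if_neg (by omega), ← this]
        refine Finset.sum_congr rfl fun i _ => ?_
        congr 1
      · ext m
        simp only [Finset.mem_Icc, Finset.mem_map, Finset.mem_range,
          Function.Embedding.coeFn_mk]
        constructor
        · rintro ⟨h1, h2⟩; exact ⟨m - 1, by omega, by omega⟩
        · rintro ⟨i, hi, rfl⟩; omega
  calc M.det = (L * M).det := by rw [Matrix.det_mul, hdetL, one_mul]
  _ = _ := by rw [hLM]

theorem stepD2 (j : ℕ) (u : ℕ → ℝ) (P : ℕ → ℝ → ℝ) :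
    Matrix.det (Matrix.of fun a b : Fin (j+1) =>
        if a.1 = 0 then (1:ℝ) else P (a.1 - 1) (u b.1))
      = Matrix.det (Matrix.of fun a c : Fin j =>
          P a.1 (u (c.1 + 1)) - P a.1 (u c.1)) := by
  classical
  set W : Fin (j+1) → ℕ → ℝ := fun a k => if a.1 = 0 then (1:ℝ) else P (a.1 - 1) (u k) with hW
  set M : Matrix (Fin (j+1)) (Fin (j+1)) ℝ := Matrix.of (fun a b : Fin (j+1) => W a b.1) with hM
  set U : Matrix (Fin (j+1)) (Fin (j+1)) ℝ := Matrix.of (fun b c : Fin (j+1) =>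
    (if b = c then (1:ℝ) else 0) + (if b.1 + 1 = c.1 then -1 else 0)) with hU
  have hdetU : U.det = 1 := by
    rw [Matrix.det_of_upperTriangular]
    · refine Finset.prod_eq_one fun i _ => ?_
      simp [U]
    · intro a b hab
      have hab' : b.1 < a.1 := hab
      simp only [U, Matrix.of_apply]
      rw [if_neg (by intro hh; rw [hh] at hab'; omega), if_neg (by omega)]
      ring
  have hMU : M * U = Matrix.of (fun a c : Fin (j+1) =>
      W a c.1 - (if c.1 = 0 then 0 else W a (c.1 - 1))) := by
    ext a c
    rw [Matrix.mul_apply]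
    simp only [U, Matrix.of_apply]
    simp_rw [mul_add, Finset.sum_add_distrib]
    congr 1
    · simp only [mul_ite, mul_one, mul_zero, Finset.sum_ite_eq', Finset.mem_univ, if_true]
      simp [M]
    · rcases Nat.eq_zero_or_pos c.1 with h | h
      · rw [if_pos h]
        rw [Finset.sum_eq_zero]
        · ring
        · intro b _
          rw [if_neg (by omega), mul_zero]
      · rw [if_neg (by omega)]
        have hlt : c.1 - 1 < j + 1 := by omega
        rw [Finset.sum_eq_single (⟨c.1 - 1, hlt⟩ : Fin (j+1))]
        · rw [if_pos (by simp; omega), mul_neg, mul_one]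
          simp [M]
        · intro b _ hb
          rw [if_neg, mul_zero]
          intro hh
          exact hb (Fin.ext (show b.1 = c.1 - 1 by omega))
        · intro hh
          exact absurd (Finset.mem_univ _) hh
  have h1 : M.det = (M * U).det := by rw [Matrix.det_mul, hdetU, mul_one]
  show M.det = _
  rw [h1, hMU, Matrix.det_succ_row_zero]
  rw [Finset.sum_eq_single (0 : Fin (j+1))]
  · have hentry : (Matrix.of (fun a c : Fin (j+1) =>
        W a c.1 - (if c.1 = 0 then 0 else W a (c.1 - 1)))) 0 0 = 1 := by
      simp [W]
    rw [hentry, mul_one, show ((0 : Fin (j+1)) : ℕ) = 0 from rfl, pow_zero, one_mul]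
    refine congrArg Matrix.det ?_
    ext a c
    have hsa : (0 : Fin (j+1)).succAbove c = c.succ := by
      rw [Fin.succAbove_zero]
    simp only [Matrix.submatrix_apply, hsa, Matrix.of_apply]
    have hc1 : (c.succ : Fin (j+1)).1 = c.1 + 1 := rfl
    have ha1 : (a.succ : Fin (j+1)).1 = a.1 + 1 := rfl
    rw [hc1, if_neg (Nat.succ_ne_zero c.1), Nat.add_sub_cancel]
    simp only [W]
    rw [ha1, if_neg (Nat.succ_ne_zero a.1), Nat.add_sub_cancel,
      if_neg (Nat.succ_ne_zero a.1)]
  · intro c _ hc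
    have hc0 : c.1 ≠ 0 := fun hh => hc (Fin.ext hh)
    have hentry : (Matrix.of (fun a c : Fin (j+1) =>
        W a c.1 - (if c.1 = 0 then 0 else W a (c.1 - 1)))) 0 c = 0 := by
      simp only [Matrix.of_apply, W]
      rw [if_neg hc0]
      simp
    rw [hentry]
    ring
  · intro hh
    exact absurd (Finset.mem_univ _) hh

/-- **Lemma 2, fourth identity.** For integers `1 ≤ n₁ < ⋯ < n_j` and reals
`0 ≤ u₀ ≤ ⋯ ≤ u_j ≤ 1`,
`∫_{D(u₀,…,u_j)} F(t₁,…,t_j,1 ; n₁,…,n_j) dt₁/(1-t₁) ⋯ dt_j/(1-t_j)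
  = Σ_{(m₁,…,m_j) ∈ X(0,n₁,…,n_j)} (m₁⋯m_j)⁻¹ · F(u₀,…,u_j ; m₁,…,m_j)`
(the summation tuples are normalized by `m i = 0` for `i ≥ j`). -/
theorem lemma2_4 (j : ℕ) (hj : 1 ≤ j) (n : ℕ → ℕ) (u : ℕ → ℝ)
    (hn0 : 0 < n 0) (hn : ∀ i, i + 1 < j → n i < n (i + 1))
    (hu0 : 0 ≤ u 0) (hum : ∀ i < j, u i ≤ u (i + 1)) (huj : u j ≤ 1) :
    (∫ t : Fin j → ℝ in {t | ∀ i : Fin j, u i.1 < t i ∧ t i < u (i.1 + 1)},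
        Fdet j (fun i => if h : i < j then t ⟨i, h⟩ else 1) n * ∏ i, (1 - t i)⁻¹)
      = ∑' m : {m : ℕ → ℕ // 0 < m 0 ∧ (∀ i < j, m i ≤ n i) ∧
            (∀ i, i + 1 < j → n i < m (i + 1)) ∧ ∀ i, j ≤ i → m i = 0},
          (∏ i ∈ Finset.range j, (m.1 i : ℝ))⁻¹ * Fdet j u m.1 := by
  classical
  -- monotonicity of u up to j
  have humono : ∀ d i, i + d ≤ j → u i ≤ u (i + d) := by
    intro d
    induction d with
    | zero => intro i _; simp
    | succ q ih =>
        intro i h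
        calc u i ≤ u (i + q) := ih i (by omega)
        _ ≤ u (i + q + 1) := hum (i + q) (by omega)
  have hbox : {t : Fin j → ℝ | ∀ i : Fin j, u i.1 < t i ∧ t i < u (i.1 + 1)}
      = Set.univ.pi (fun c : Fin j => Set.Ioo (u c.1) (u (c.1 + 1))) := by
    ext t
    simp [Set.mem_pi, Set.mem_Ioo, Set.mem_setOf_eq]
  rw [hbox]
  have hmeas : MeasurableSet (Set.univ.pi (fun c : Fin j => Set.Ioo (u c.1) (u (c.1 + 1)))) :=
    MeasurableSet.univ_pi (fun c => measurableSet_Ioo)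
  rw [setIntegral_congr_fun hmeas (g := fun t : Fin j → ℝ =>
      Matrix.det (Matrix.of fun a c : Fin j => ∑ i ∈ Finset.range (n a.1), t c ^ i)) ?_]
  swap
  · intro t ht
    refine stepA n t fun i => ?_
    have h1 : t i < u (i.1 + 1) := (ht i (Set.mem_univ i)).2
    have h2 : u (i.1 + 1) ≤ u j := by
      have := humono (j - (i.1 + 1)) (i.1 + 1) (by omega)
      rwa [show i.1 + 1 + (j - (i.1 + 1)) = j by omega] at this
    exact ne_of_lt (lt_of_lt_of_le h1 (le_trans h2 huj))
  rw [int_det_box (fun a c x => ∑ i ∈ Finset.range (n a.1), x ^ i)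
    (fun c => Set.Ioo (u c.1) (u (c.1 + 1))) (fun c => measurableSet_Ioo) ?_]
  swap
  · intro a c
    have hcont : Continuous (fun x : ℝ => ∑ i ∈ Finset.range (n a.1), x ^ i) :=
      continuous_finset_sum _ (fun i _ => continuous_pow i)
    exact (hcont.integrableOn_Icc).mono_set Set.Ioo_subset_Icc_self
  rw [stepC j hj n u, stepC2 j n u, stepD j hj n hn u]
  rw [show (Matrix.det (Matrix.of fun a b : Fin (j+1) =>
      if a.1 = 0 then (1:ℝ)
      else ∑ x ∈ Finset.Ioc 0 (n (a.1 - 1)), ((x:ℝ))⁻¹ * u b.1 ^ x))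
      = Matrix.det (Matrix.of fun a b : Fin (j+1) =>
          if a.1 = 0 then (1:ℝ)
          else (fun p y => ∑ x ∈ Finset.Ioc 0 (n p), ((x:ℝ))⁻¹ * y ^ x) (a.1 - 1) (u b.1))
      from rfl]
  rw [stepD2 j u (fun p y => ∑ x ∈ Finset.Ioc 0 (n p), ((x:ℝ))⁻¹ * y ^ x)]
  congr 1
  ext a c
  simp only [Matrix.of_apply]
  rw [oneD (n a.1) (u c.1) (u (c.1 + 1)) (hum c.1 c.2)]
  rw [← Finset.sum_sub_distrib]
  refine Finset.sum_congr rfl fun m _ => ?_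
  rw [sub_div]
  rw [div_eq_inv_mul, div_eq_inv_mul]
end

section
/- The following identity of convergent sums over positive integers holds: Σ_{a ≤ b ≤ c} 1/(a·b·c²) = Σ_{a < c, b ≤ c} 1/(a·b·c²), where on the left the sum is over all triples (a,b,c) of positive integers with a ≤ b ≤ c, and on the right over all triples (a,b,c) of positive integers with a < c and b ≤ c. -/
open Finset Filter ENNReal

namespace SchurAux

/-- transfer a real `HasSum` of a nonneg function to an `ENNReal` tsum -/
lemma tsum_ofReal_hasSum {f : ℕ → ℝ} {s : ℝ} (h0 : ∀ n, 0 ≤ f n) (h : HasSum f s) :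
    ∑' n : ℕ, ENNReal.ofReal (f n) = ENNReal.ofReal s := by
  rw [← ENNReal.ofReal_tsum_of_nonneg h0 h.summable, h.tsum_eq]

lemma summable_inv_sq : Summable (fun m : ℕ => (((m:ℝ)+1)^2)⁻¹) := by
  have h := Real.summable_one_div_nat_pow.mpr (le_refl 2)
  have h2 := (summable_nat_add_iff 1).mpr h
  apply h2.congr
  intro n
  push_cast
  rw [one_div]

/-- telescoping: `∑_m 1/((m+1)(m+y+2)) = H_{y+1}/(y+1)` -/
lemma telescope (y : ℕ) :
    HasSum (fun m : ℕ => (((m:ℝ)+1) * ((m:ℝ)+(y:ℝ)+2))⁻¹)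
      ((∑ j ∈ Finset.range (y+1), ((j:ℝ)+1)⁻¹) / ((y:ℝ)+1)) := by
  set h : ℕ → ℝ := fun i => ∑ j ∈ Finset.range (y+1), ((i:ℝ)+(j:ℝ)+1)⁻¹ with hh
  have hpos : ∀ m : ℕ, (0:ℝ) < ((m:ℝ)+1) * ((m:ℝ)+(y:ℝ)+2) := by
    intro m; positivity
  have key : ∀ m : ℕ, (((m:ℝ)+1) * ((m:ℝ)+(y:ℝ)+2))⁻¹
      = (h m - h (m+1)) / ((y:ℝ)+1) := by
    intro m
    have : h m - h (m+1)
        = ∑ j ∈ Finset.range (y+1), ((((m:ℝ)+(j:ℝ)+1)⁻¹) - (((m:ℝ)+(j:ℝ)+2)⁻¹)) := by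
      rw [hh]
      simp only
      rw [← Finset.sum_sub_distrib]
      refine Finset.sum_congr rfl fun j _ => ?_
      push_cast
      ring_nf
    rw [this]
    have tele : ∑ j ∈ Finset.range (y+1), ((((m:ℝ)+(j:ℝ)+1)⁻¹) - (((m:ℝ)+(j:ℝ)+2)⁻¹))
        = ((m:ℝ)+1)⁻¹ - ((m:ℝ)+(y:ℝ)+2)⁻¹ := by
      have h2 := Finset.sum_range_sub' (fun j : ℕ => ((m:ℝ)+(j:ℝ)+1)⁻¹) (y+1)
      have e1 : ∑ j ∈ Finset.range (y+1), ((((m:ℝ)+(j:ℝ)+1)⁻¹) - (((m:ℝ)+(j:ℝ)+2)⁻¹))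
          = ∑ j ∈ Finset.range (y+1),
            ((fun j : ℕ => ((m:ℝ)+(j:ℝ)+1)⁻¹) j - (fun j : ℕ => ((m:ℝ)+(j:ℝ)+1)⁻¹) (j+1)) := by
        refine Finset.sum_congr rfl fun j _ => ?_
        push_cast
        ring_nf
      rw [e1, h2]
      push_cast
      ring_nf
    rw [tele]
    have hm1 : ((m:ℝ)+1) ≠ 0 := by positivity
    have hm2 : ((m:ℝ)+(y:ℝ)+2) ≠ 0 := by positivity
    have hy : ((y:ℝ)+1) ≠ 0 := by positivity
    field_simp
    ring
  have hsummable : Summable (fun m : ℕ => (((m:ℝ)+1) * ((m:ℝ)+(y:ℝ)+2))⁻¹) := by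
    refine Summable.of_nonneg_of_le (fun m => by positivity) (fun m => ?_) summable_inv_sq
    have h1 : ((m:ℝ)+1)^2 ≤ ((m:ℝ)+1) * ((m:ℝ)+(y:ℝ)+2) := by
      have : (0:ℝ) ≤ (m:ℝ)+1 := by positivity
      nlinarith [Nat.cast_nonneg (α := ℝ) y]
    exact inv_anti₀ (by positivity) h1
  rw [hsummable.hasSum_iff_tendsto_nat]
  have hps : ∀ M : ℕ, ∑ m ∈ Finset.range M, (((m:ℝ)+1) * ((m:ℝ)+(y:ℝ)+2))⁻¹
      = (h 0 - h M) / ((y:ℝ)+1) := by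
    intro M
    calc ∑ m ∈ Finset.range M, (((m:ℝ)+1) * ((m:ℝ)+(y:ℝ)+2))⁻¹
        = ∑ m ∈ Finset.range M, (h m - h (m+1)) / ((y:ℝ)+1) := by
          exact Finset.sum_congr rfl fun m _ => key m
      _ = (∑ m ∈ Finset.range M, (h m - h (m+1))) / ((y:ℝ)+1) := by
          rw [Finset.sum_div]
      _ = (h 0 - h M) / ((y:ℝ)+1) := by rw [Finset.sum_range_sub' h M]
  simp only [hps]
  have hh0 : h 0 = ∑ j ∈ Finset.range (y+1), ((j:ℝ)+1)⁻¹ := by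
    rw [hh]; simp
  have hlim : Tendsto h atTop (nhds 0) := by
    rw [hh]
    have : Tendsto (fun i : ℕ => ∑ j ∈ Finset.range (y+1), ((i:ℝ)+(j:ℝ)+1)⁻¹) atTop
        (nhds (∑ j ∈ Finset.range (y+1), (0:ℝ))) := by
      refine tendsto_finset_sum _ fun j _ => ?_
      refine Tendsto.inv_tendsto_atTop ?_
      have hbase : Tendsto (fun i : ℕ => (i:ℝ)) atTop atTop := tendsto_natCast_atTop_atTop
      have := tendsto_atTop_add_const_right atTop ((j:ℝ)+1) hbase
      simpa [add_assoc] using this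
    simpa using this
  have : Tendsto (fun M : ℕ => (h 0 - h M) / ((y:ℝ)+1)) atTop
      (nhds ((h 0 - 0) / ((y:ℝ)+1))) := by
    exact (Tendsto.sub tendsto_const_nhds hlim).div_const _
  simpa [hh0] using this

/-- tail telescoping: `∑_k 1/((b+k+1)(b+k+2)) = 1/(b+1)` -/
lemma tail_telescope (b : ℕ) :
    HasSum (fun k : ℕ => (((b:ℝ)+(k:ℝ)+1) * ((b:ℝ)+(k:ℝ)+2))⁻¹) (((b:ℝ)+1)⁻¹) := by
  set u : ℕ → ℝ := fun k => ((b:ℝ)+(k:ℝ)+1)⁻¹ with hu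
  have key : ∀ k : ℕ, (((b:ℝ)+(k:ℝ)+1) * ((b:ℝ)+(k:ℝ)+2))⁻¹ = u k - u (k+1) := by
    intro k
    rw [hu]
    simp only
    push_cast
    rw [inv_sub_inv (by positivity) (by positivity)]
    ring_nf
  have hsummable : Summable (fun k : ℕ => (((b:ℝ)+(k:ℝ)+1) * ((b:ℝ)+(k:ℝ)+2))⁻¹) := by
    refine Summable.of_nonneg_of_le (fun m => by positivity) (fun m => ?_) summable_inv_sq
    refine inv_anti₀ (by positivity) ?_
    nlinarith [Nat.cast_nonneg (α := ℝ) b, Nat.cast_nonneg (α := ℝ) m]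
  rw [hsummable.hasSum_iff_tendsto_nat]
  have hps : ∀ M : ℕ, ∑ k ∈ Finset.range M, (((b:ℝ)+(k:ℝ)+1) * ((b:ℝ)+(k:ℝ)+2))⁻¹
      = u 0 - u M := by
    intro M
    rw [Finset.sum_congr rfl fun k _ => key k, Finset.sum_range_sub' u M]
  simp only [hps]
  have hlim : Tendsto u atTop (nhds 0) := by
    rw [hu]
    refine Tendsto.inv_tendsto_atTop ?_
    have hbase : Tendsto (fun i : ℕ => (i:ℝ)) atTop atTop := tendsto_natCast_atTop_atTop
    have := tendsto_atTop_add_const_right atTop ((b:ℝ)+1) hbase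
    refine this.congr fun i => by ring
  have : Tendsto (fun M : ℕ => u 0 - u M) atTop (nhds (u 0 - 0)) :=
    Tendsto.sub tendsto_const_nhds hlim
  have hu0 : u 0 = ((b:ℝ)+1)⁻¹ := by rw [hu]; norm_num
  simpa [hu0] using this

/-- tail bound: `∑_k 1/(b+k+2)² ≤ 1/(b+1)` in `ℝ≥0∞` -/
lemma tail_bound (b : ℕ) :
    ∑' k : ℕ, ENNReal.ofReal ((((b:ℝ)+(k:ℝ)+2)^2)⁻¹) ≤ ENNReal.ofReal (((b:ℝ)+1)⁻¹) := by
  have h1 : ∑' k : ℕ, ENNReal.ofReal ((((b:ℝ)+(k:ℝ)+1) * ((b:ℝ)+(k:ℝ)+2))⁻¹)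
      = ENNReal.ofReal (((b:ℝ)+1)⁻¹) :=
    tsum_ofReal_hasSum (fun k => by positivity) (tail_telescope b)
  rw [← h1]
  refine Summable.tsum_le_tsum (fun k => ?_) ENNReal.summable ENNReal.summable
  refine ENNReal.ofReal_le_ofReal ?_
  refine inv_anti₀ (by positivity) ?_
  nlinarith [Nat.cast_nonneg (α := ℝ) b, Nat.cast_nonneg (α := ℝ) k]

/-- shift lemma for `ℝ≥0∞` sums -/
lemma tsum_shift (c : ℕ) (f : ℕ → ℝ≥0∞) :
    ∑' n : ℕ, (if c < n then f n else 0) = ∑' k : ℕ, f (k+c+1) := by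
  have hinj : Function.Injective (fun k : ℕ => k+c+1) := by
    intro a b h
    simp only at h
    omega
  have hsupp : Function.support (fun n => if c < n then f n else 0)
      ⊆ Set.range (fun k : ℕ => k+c+1) := by
    intro n hn
    simp only [Function.mem_support] at hn
    by_cases h : c < n
    · exact ⟨n-c-1, by simp only; omega⟩
    · simp [h] at hn
  rw [← hinj.tsum_eq (f := fun n => if c < n then f n else 0) hsupp]
  refine tsum_congr fun k => ?_
  show (if c < k+c+1 then f (k+c+1) else 0) = f (k+c+1)
  rw [if_pos (by omega)]

lemma tsum_ite_pull {P : Prop} [Decidable P] (f : ℕ → ℝ≥0∞) :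
    ∑' n : ℕ, (if P then f n else 0) = if P then ∑' n, f n else 0 := by
  split_ifs <;> simp

lemma ofReal_ne_top (x : ℝ) : ENNReal.ofReal x ≠ ⊤ := ENNReal.ofReal_ne_top

/-- uniform bound: a double sum of shape `∑_n ∑_k 1/((n+1)^e · (n+k+2)²)`
    with `e ≥ 1` is finite, where each term is at most `1/((n+1)(n+k+2)²)`. -/
lemma sum_fin_aux :
    ∑' (n : ℕ) (k : ℕ), ENNReal.ofReal ((((n:ℝ)+1) * ((n:ℝ)+(k:ℝ)+2)^2)⁻¹) ≠ ⊤ := by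
  have hle : ∑' (n : ℕ) (k : ℕ), ENNReal.ofReal ((((n:ℝ)+1) * ((n:ℝ)+(k:ℝ)+2)^2)⁻¹)
      ≤ ∑' n : ℕ, ENNReal.ofReal ((((n:ℝ)+1)^2)⁻¹) := by
    refine Summable.tsum_le_tsum (fun n => ?_) ENNReal.summable ENNReal.summable
    have step1 : ∑' k : ℕ, ENNReal.ofReal ((((n:ℝ)+1) * ((n:ℝ)+(k:ℝ)+2)^2)⁻¹)
        = ENNReal.ofReal (((n:ℝ)+1)⁻¹) *
          ∑' k : ℕ, ENNReal.ofReal ((((n:ℝ)+(k:ℝ)+2)^2)⁻¹) := by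
      rw [← ENNReal.tsum_mul_left]
      refine tsum_congr fun k => ?_
      rw [← ENNReal.ofReal_mul (by positivity), mul_inv, ]
    rw [step1]
    calc ENNReal.ofReal (((n:ℝ)+1)⁻¹) * ∑' k : ℕ, ENNReal.ofReal ((((n:ℝ)+(k:ℝ)+2)^2)⁻¹)
        ≤ ENNReal.ofReal (((n:ℝ)+1)⁻¹) * ENNReal.ofReal (((n:ℝ)+1)⁻¹) := by
          exact mul_le_mul_right (tail_bound n) _
      _ = ENNReal.ofReal ((((n:ℝ)+1)^2)⁻¹) := by
          rw [← ENNReal.ofReal_mul (by positivity)]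
          congr 1
          rw [← mul_inv]
          congr 1
          ring
  refine ne_top_of_le_ne_top ?_ hle
  rw [← ENNReal.ofReal_tsum_of_nonneg (fun n => by positivity) summable_inv_sq]
  exact ENNReal.ofReal_ne_top

noncomputable def Z4 : ℝ≥0∞ := ∑' n : ℕ, ENNReal.ofReal ((((n:ℝ)+1)^4)⁻¹)

noncomputable def Z31 : ℝ≥0∞ :=
  ∑' (n : ℕ) (k : ℕ), ENNReal.ofReal ((((n:ℝ)+1) * ((n:ℝ)+(k:ℝ)+2)^3)⁻¹)

noncomputable def Z22 : ℝ≥0∞ :=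
  ∑' (n : ℕ) (k : ℕ), ENNReal.ofReal ((((n:ℝ)+1)^2 * ((n:ℝ)+(k:ℝ)+2)^2)⁻¹)

noncomputable def MA : ℝ≥0∞ :=
  ∑' (m : ℕ) (n : ℕ) (k : ℕ),
    ENNReal.ofReal ((((m:ℝ)+1) * ((m:ℝ)+(n:ℝ)+2) * ((m:ℝ)+(n:ℝ)+(k:ℝ)+3)^2)⁻¹)

noncomputable def T2 : ℝ≥0∞ :=
  ∑' (m : ℕ) (n : ℕ), ENNReal.ofReal ((((m:ℝ)+1) * ((n:ℝ)+1) * ((m:ℝ)+(n:ℝ)+2)^2)⁻¹)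

noncomputable def T3 : ℝ≥0∞ :=
  ∑' (m : ℕ) (n : ℕ) (k : ℕ),
    ENNReal.ofReal ((((m:ℝ)+1) * ((n:ℝ)+1) * ((k:ℝ)+1) * ((m:ℝ)+(n:ℝ)+(k:ℝ)+3))⁻¹)

lemma T2_eq : T2 = Z31 + Z31 := by
  have split : ∀ m n : ℕ,
      ENNReal.ofReal ((((m:ℝ)+1) * ((n:ℝ)+1) * ((m:ℝ)+(n:ℝ)+2)^2)⁻¹)
      = ENNReal.ofReal ((((m:ℝ)+1) * ((m:ℝ)+(n:ℝ)+2)^3)⁻¹)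
        + ENNReal.ofReal ((((n:ℝ)+1) * ((m:ℝ)+(n:ℝ)+2)^3)⁻¹) := by
    intro m n
    rw [← ENNReal.ofReal_add (by positivity) (by positivity)]
    congr 1
    have h1 : ((m:ℝ)+1) ≠ 0 := by positivity
    have h2 : ((n:ℝ)+1) ≠ 0 := by positivity
    have h3 : ((m:ℝ)+(n:ℝ)+2) ≠ 0 := by positivity
    field_simp
    ring
  calc T2 = (∑' (m : ℕ) (n : ℕ), ENNReal.ofReal ((((m:ℝ)+1) * ((m:ℝ)+(n:ℝ)+2)^3)⁻¹))
        + ∑' (m : ℕ) (n : ℕ), ENNReal.ofReal ((((n:ℝ)+1) * ((m:ℝ)+(n:ℝ)+2)^3)⁻¹) := by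
        rw [T2, ← ENNReal.tsum_add]
        refine tsum_congr fun m => ?_
        rw [← ENNReal.tsum_add]
        exact tsum_congr fun n => split m n
    _ = Z31 + Z31 := by
        congr 1
        rw [ENNReal.tsum_comm]
        simp only [Z31]
        refine tsum_congr fun n => tsum_congr fun m => ?_
        congr 2
        ring

lemma T2_add_Z22 : T2 + Z22 = Z31 + Z4 := by
  have hZ22 : Z22 = ∑' (m : ℕ) (n : ℕ),
      ENNReal.ofReal ((((n:ℝ)+1)^2 * ((m:ℝ)+(n:ℝ)+2)^2)⁻¹) := by
    rw [Z22, ENNReal.tsum_comm]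
    refine tsum_congr fun m => tsum_congr fun n => ?_
    congr 2
    ring
  have hmerge : T2 + Z22 = ∑' (m : ℕ) (n : ℕ),
      ENNReal.ofReal ((((m:ℝ)+1) * ((n:ℝ)+1)^2 * ((m:ℝ)+(n:ℝ)+2))⁻¹) := by
    rw [hZ22, T2, ← ENNReal.tsum_add]
    refine tsum_congr fun m => ?_
    rw [← ENNReal.tsum_add]
    refine tsum_congr fun n => ?_
    rw [← ENNReal.ofReal_add (by positivity) (by positivity)]
    congr 1
    have h1 : ((m:ℝ)+1) ≠ 0 := by positivity
    have h2 : ((n:ℝ)+1) ≠ 0 := by positivity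
    have h3 : ((m:ℝ)+(n:ℝ)+2) ≠ 0 := by positivity
    field_simp
    ring
  rw [hmerge, ENNReal.tsum_comm]
  have inner : ∀ n : ℕ, ∑' m : ℕ,
      ENNReal.ofReal ((((m:ℝ)+1) * ((n:ℝ)+1)^2 * ((m:ℝ)+(n:ℝ)+2))⁻¹)
      = ENNReal.ofReal ((((n:ℝ)+1)^2)⁻¹ *
          ((∑ j ∈ Finset.range (n+1), ((j:ℝ)+1)⁻¹) / ((n:ℝ)+1))) := by
    intro n
    have hs : HasSum (fun m : ℕ => (((n:ℝ)+1)^2)⁻¹ * (((m:ℝ)+1) * ((m:ℝ)+(n:ℝ)+2))⁻¹)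
        ((((n:ℝ)+1)^2)⁻¹ * ((∑ j ∈ Finset.range (n+1), ((j:ℝ)+1)⁻¹) / ((n:ℝ)+1))) :=
      (telescope n).mul_left _
    have := tsum_ofReal_hasSum (fun m => by positivity) hs
    rw [← this]
    refine tsum_congr fun m => ?_
    congr 1
    rw [← mul_inv]
    congr 1
    ring
  calc ∑' (n : ℕ) (m : ℕ),
      ENNReal.ofReal ((((m:ℝ)+1) * ((n:ℝ)+1)^2 * ((m:ℝ)+(n:ℝ)+2))⁻¹)
      = ∑' n : ℕ, ENNReal.ofReal ((((n:ℝ)+1)^2)⁻¹ *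
          ((∑ j ∈ Finset.range (n+1), ((j:ℝ)+1)⁻¹) / ((n:ℝ)+1))) :=
        tsum_congr inner
    _ = ∑' n : ℕ, ∑ j ∈ Finset.range (n+1),
          ENNReal.ofReal ((((j:ℝ)+1) * ((n:ℝ)+1)^3)⁻¹) := by
        refine tsum_congr fun n => ?_
        rw [div_eq_mul_inv, Finset.sum_mul, Finset.mul_sum,
          ENNReal.ofReal_sum_of_nonneg (fun j _ => by positivity)]
        refine Finset.sum_congr rfl fun j _ => ?_
        congr 1
        rw [← mul_inv, ← mul_inv]
        congr 1
        ring
    _ = (∑' n : ℕ, ∑ j ∈ Finset.range n,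
          ENNReal.ofReal ((((j:ℝ)+1) * ((n:ℝ)+1)^3)⁻¹)) + Z4 := by
        simp only [Z4]
        rw [← ENNReal.tsum_add]
        refine tsum_congr fun n => ?_
        rw [Finset.sum_range_succ]
        congr 2
        ring
    _ = Z31 + Z4 := by
        congr 1
        calc ∑' n : ℕ, ∑ j ∈ Finset.range n,
              ENNReal.ofReal ((((j:ℝ)+1) * ((n:ℝ)+1)^3)⁻¹)
            = ∑' (n : ℕ) (j : ℕ), (if j < n then
                ENNReal.ofReal ((((j:ℝ)+1) * ((n:ℝ)+1)^3)⁻¹) else 0) := by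
              refine tsum_congr fun n => ?_
              rw [tsum_eq_sum (s := Finset.range n)
                (fun j hj => by rw [if_neg (by simpa using hj)])]
              exact Finset.sum_congr rfl fun j hj =>
                (if_pos (Finset.mem_range.mp hj)).symm
          _ = ∑' (j : ℕ) (n : ℕ), (if j < n then
                ENNReal.ofReal ((((j:ℝ)+1) * ((n:ℝ)+1)^3)⁻¹) else 0) :=
              ENNReal.tsum_comm
          _ = Z31 := by
              simp only [Z31]
              refine tsum_congr fun j => ?_
              rw [tsum_shift j (fun n => ENNReal.ofReal ((((j:ℝ)+1) * ((n:ℝ)+1)^3)⁻¹))]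
              refine tsum_congr fun k => ?_
              congr 2
              push_cast
              ring

lemma Z31_ne_top : Z31 ≠ ⊤ := by
  refine ne_top_of_le_ne_top sum_fin_aux ?_
  refine Summable.tsum_le_tsum (fun n => Summable.tsum_le_tsum (fun k => ?_) ENNReal.summable ENNReal.summable)
    ENNReal.summable ENNReal.summable
  refine ENNReal.ofReal_le_ofReal (inv_anti₀ (by positivity) ?_)
  have h1 : (1:ℝ) ≤ (n:ℝ)+(k:ℝ)+2 := by
    have := Nat.cast_nonneg (α := ℝ) n
    have := Nat.cast_nonneg (α := ℝ) k
    linarith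
  have h2 : ((n:ℝ)+(k:ℝ)+2)^2 ≤ ((n:ℝ)+(k:ℝ)+2)^3 := pow_le_pow_right₀ h1 (by norm_num)
  exact mul_le_mul_of_nonneg_left h2 (by positivity)

lemma Z22_ne_top : Z22 ≠ ⊤ := by
  refine ne_top_of_le_ne_top sum_fin_aux ?_
  refine Summable.tsum_le_tsum (fun n => Summable.tsum_le_tsum (fun k => ?_) ENNReal.summable ENNReal.summable)
    ENNReal.summable ENNReal.summable
  refine ENNReal.ofReal_le_ofReal (inv_anti₀ (by positivity) ?_)
  have h1 : ((n:ℝ)+1) ≤ ((n:ℝ)+1)^2 := by nlinarith [Nat.cast_nonneg (α := ℝ) n]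
  exact mul_le_mul_of_nonneg_right h1 (by positivity)

lemma Z4_ne_top : Z4 ≠ ⊤ := by
  have hle : Z4 ≤ ∑' n : ℕ, ENNReal.ofReal ((((n:ℝ)+1)^2)⁻¹) := by
    refine Summable.tsum_le_tsum (fun n => ?_) ENNReal.summable ENNReal.summable
    refine ENNReal.ofReal_le_ofReal (inv_anti₀ (by positivity) ?_)
    have h1 : (1:ℝ) ≤ (n:ℝ)+1 := by
      have := Nat.cast_nonneg (α := ℝ) n
      linarith
    exact pow_le_pow_right₀ h1 (by norm_num)
  refine ne_top_of_le_ne_top ?_ hle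
  rw [← ENNReal.ofReal_tsum_of_nonneg (fun n => by positivity) summable_inv_sq]
  exact ENNReal.ofReal_ne_top

lemma MA_ne_top : MA ≠ ⊤ := by
  refine ne_top_of_le_ne_top sum_fin_aux ?_
  rw [MA]
  refine Summable.tsum_le_tsum (fun m => ?_) ENNReal.summable ENNReal.summable
  have inner2 : ∀ n : ℕ, ∑' k : ℕ,
      ENNReal.ofReal ((((m:ℝ)+1) * ((m:ℝ)+(n:ℝ)+2) * ((m:ℝ)+(n:ℝ)+(k:ℝ)+3)^2)⁻¹)
      ≤ ENNReal.ofReal ((((m:ℝ)+1) * ((m:ℝ)+(n:ℝ)+2)^2)⁻¹) := by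
    intro n
    have factor : ∀ k : ℕ,
        ENNReal.ofReal ((((m:ℝ)+1) * ((m:ℝ)+(n:ℝ)+2) * ((m:ℝ)+(n:ℝ)+(k:ℝ)+3)^2)⁻¹)
        = ENNReal.ofReal ((((m:ℝ)+1) * ((m:ℝ)+(n:ℝ)+2))⁻¹) *
          ENNReal.ofReal (((((m+n+1:ℕ):ℝ)+(k:ℝ)+2)^2)⁻¹) := by
      intro k
      rw [← ENNReal.ofReal_mul (by positivity)]
      congr 1
      rw [← mul_inv]
      congr 1
      push_cast
      ring
    calc ∑' k : ℕ, ENNReal.ofReal ((((m:ℝ)+1) * ((m:ℝ)+(n:ℝ)+2) * ((m:ℝ)+(n:ℝ)+(k:ℝ)+3)^2)⁻¹)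
        = ENNReal.ofReal ((((m:ℝ)+1) * ((m:ℝ)+(n:ℝ)+2))⁻¹) *
          ∑' k : ℕ, ENNReal.ofReal (((((m+n+1:ℕ):ℝ)+(k:ℝ)+2)^2)⁻¹) := by
          rw [← ENNReal.tsum_mul_left]
          exact tsum_congr factor
      _ ≤ ENNReal.ofReal ((((m:ℝ)+1) * ((m:ℝ)+(n:ℝ)+2))⁻¹) *
          ENNReal.ofReal ((((m+n+1:ℕ):ℝ)+1)⁻¹) := mul_le_mul_right (tail_bound (m+n+1)) _
      _ = ENNReal.ofReal ((((m:ℝ)+1) * ((m:ℝ)+(n:ℝ)+2)^2)⁻¹) := by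
          rw [← ENNReal.ofReal_mul (by positivity)]
          congr 1
          rw [← mul_inv]
          congr 1
          push_cast
          ring
  exact Summable.tsum_le_tsum inner2 ENNReal.summable ENNReal.summable

lemma Z_rel : Z22 + Z31 = Z4 := by
  have key : Z31 + (Z31 + Z22) = Z31 + Z4 := by
    calc Z31 + (Z31 + Z22) = (Z31 + Z31) + Z22 := (add_assoc _ _ _).symm
      _ = T2 + Z22 := by rw [← T2_eq]
      _ = Z31 + Z4 := T2_add_Z22
  have := (ENNReal.add_right_inj Z31_ne_top).mp key
  rw [← this]
  exact add_comm _ _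

lemma tsum2_add {f g : ℕ → ℕ → ℝ≥0∞} :
    (∑' (m : ℕ) (n : ℕ), (f m n + g m n))
      = (∑' (m : ℕ) (n : ℕ), f m n) + (∑' (m : ℕ) (n : ℕ), g m n) := by
  calc (∑' (m : ℕ) (n : ℕ), (f m n + g m n))
      = ∑' (m : ℕ), ((∑' n, f m n) + ∑' n, g m n) :=
        tsum_congr fun m => ENNReal.tsum_add
    _ = _ := ENNReal.tsum_add

lemma tsum3_add {f g : ℕ → ℕ → ℕ → ℝ≥0∞} :
    (∑' (m : ℕ) (n : ℕ) (k : ℕ), (f m n k + g m n k))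
      = (∑' (m : ℕ) (n : ℕ) (k : ℕ), f m n k) + (∑' (m : ℕ) (n : ℕ) (k : ℕ), g m n k) := by
  calc (∑' (m : ℕ) (n : ℕ) (k : ℕ), (f m n k + g m n k))
      = ∑' (m : ℕ), ((∑' (n : ℕ) (k : ℕ), f m n k) + ∑' (n : ℕ) (k : ℕ), g m n k) :=
        tsum_congr fun m => tsum2_add
    _ = _ := ENNReal.tsum_add

lemma T3_eq_6MA : T3 = (MA + MA) + ((MA + MA) + (MA + MA)) := by
  have split : ∀ m n k : ℕ,
      ENNReal.ofReal ((((m:ℝ)+1) * ((n:ℝ)+1) * ((k:ℝ)+1) * ((m:ℝ)+(n:ℝ)+(k:ℝ)+3))⁻¹)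
      = ENNReal.ofReal ((((m:ℝ)+1) * ((n:ℝ)+1) * ((m:ℝ)+(n:ℝ)+(k:ℝ)+3)^2)⁻¹)
      + (ENNReal.ofReal ((((m:ℝ)+1) * ((k:ℝ)+1) * ((m:ℝ)+(n:ℝ)+(k:ℝ)+3)^2)⁻¹)
        + ENNReal.ofReal ((((n:ℝ)+1) * ((k:ℝ)+1) * ((m:ℝ)+(n:ℝ)+(k:ℝ)+3)^2)⁻¹)) := by
    intro m n k
    rw [← ENNReal.ofReal_add (by positivity) (by positivity),
      ← ENNReal.ofReal_add (by positivity) (by positivity)]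
    congr 1
    have h1 : ((m:ℝ)+1) ≠ 0 := by positivity
    have h2 : ((n:ℝ)+1) ≠ 0 := by positivity
    have h3 : ((k:ℝ)+1) ≠ 0 := by positivity
    have h4 : ((m:ℝ)+(n:ℝ)+(k:ℝ)+3) ≠ 0 := by positivity
    field_simp
    ring
  have step1 : T3 = (∑' (m : ℕ) (n : ℕ) (k : ℕ),
        ENNReal.ofReal ((((m:ℝ)+1) * ((n:ℝ)+1) * ((m:ℝ)+(n:ℝ)+(k:ℝ)+3)^2)⁻¹))
      + ((∑' (m : ℕ) (n : ℕ) (k : ℕ),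
        ENNReal.ofReal ((((m:ℝ)+1) * ((k:ℝ)+1) * ((m:ℝ)+(n:ℝ)+(k:ℝ)+3)^2)⁻¹))
      + (∑' (m : ℕ) (n : ℕ) (k : ℕ),
        ENNReal.ofReal ((((n:ℝ)+1) * ((k:ℝ)+1) * ((m:ℝ)+(n:ℝ)+(k:ℝ)+3)^2)⁻¹))) := by
    rw [T3, ← tsum3_add, ← tsum3_add]
    exact tsum_congr fun m => tsum_congr fun n => tsum_congr fun k => split m n k
  -- the common value of all three permuted sums
  have U_eq_2MA : (∑' (m : ℕ) (n : ℕ) (k : ℕ),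
      ENNReal.ofReal ((((m:ℝ)+1) * ((n:ℝ)+1) * ((m:ℝ)+(n:ℝ)+(k:ℝ)+3)^2)⁻¹)) = MA + MA := by
    have split2 : ∀ m n k : ℕ,
        ENNReal.ofReal ((((m:ℝ)+1) * ((n:ℝ)+1) * ((m:ℝ)+(n:ℝ)+(k:ℝ)+3)^2)⁻¹)
        = ENNReal.ofReal ((((m:ℝ)+1) * ((m:ℝ)+(n:ℝ)+2) * ((m:ℝ)+(n:ℝ)+(k:ℝ)+3)^2)⁻¹)
        + ENNReal.ofReal ((((n:ℝ)+1) * ((m:ℝ)+(n:ℝ)+2) * ((m:ℝ)+(n:ℝ)+(k:ℝ)+3)^2)⁻¹) := by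
      intro m n k
      rw [← ENNReal.ofReal_add (by positivity) (by positivity)]
      congr 1
      have h1 : ((m:ℝ)+1) ≠ 0 := by positivity
      have h2 : ((n:ℝ)+1) ≠ 0 := by positivity
      have h3 : ((m:ℝ)+(n:ℝ)+2) ≠ 0 := by positivity
      have h4 : ((m:ℝ)+(n:ℝ)+(k:ℝ)+3) ≠ 0 := by positivity
      field_simp
      ring
    calc (∑' (m : ℕ) (n : ℕ) (k : ℕ),
        ENNReal.ofReal ((((m:ℝ)+1) * ((n:ℝ)+1) * ((m:ℝ)+(n:ℝ)+(k:ℝ)+3)^2)⁻¹))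
        = MA + ∑' (m : ℕ) (n : ℕ) (k : ℕ),
          ENNReal.ofReal ((((n:ℝ)+1) * ((m:ℝ)+(n:ℝ)+2) * ((m:ℝ)+(n:ℝ)+(k:ℝ)+3)^2)⁻¹) := by
          rw [MA, ← tsum3_add]
          exact tsum_congr fun m => tsum_congr fun n => tsum_congr fun k => split2 m n k
      _ = MA + MA := by
          congr 1
          rw [ENNReal.tsum_comm, MA]
          refine tsum_congr fun n => tsum_congr fun m => tsum_congr fun k => ?_
          congr 2
          ring
  have perm2 : (∑' (m : ℕ) (n : ℕ) (k : ℕ),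
      ENNReal.ofReal ((((m:ℝ)+1) * ((k:ℝ)+1) * ((m:ℝ)+(n:ℝ)+(k:ℝ)+3)^2)⁻¹))
      = ∑' (m : ℕ) (n : ℕ) (k : ℕ),
      ENNReal.ofReal ((((m:ℝ)+1) * ((n:ℝ)+1) * ((m:ℝ)+(n:ℝ)+(k:ℝ)+3)^2)⁻¹) := by
    refine tsum_congr fun m => ?_
    rw [ENNReal.tsum_comm]
    refine tsum_congr fun n => tsum_congr fun k => ?_
    congr 2
    ring
  have perm3 : (∑' (m : ℕ) (n : ℕ) (k : ℕ),
      ENNReal.ofReal ((((n:ℝ)+1) * ((k:ℝ)+1) * ((m:ℝ)+(n:ℝ)+(k:ℝ)+3)^2)⁻¹))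
      = ∑' (m : ℕ) (n : ℕ) (k : ℕ),
      ENNReal.ofReal ((((m:ℝ)+1) * ((n:ℝ)+1) * ((m:ℝ)+(n:ℝ)+(k:ℝ)+3)^2)⁻¹) := by
    calc (∑' (m : ℕ) (n : ℕ) (k : ℕ),
        ENNReal.ofReal ((((n:ℝ)+1) * ((k:ℝ)+1) * ((m:ℝ)+(n:ℝ)+(k:ℝ)+3)^2)⁻¹))
        = ∑' (n : ℕ) (m : ℕ) (k : ℕ),
          ENNReal.ofReal ((((n:ℝ)+1) * ((k:ℝ)+1) * ((m:ℝ)+(n:ℝ)+(k:ℝ)+3)^2)⁻¹) :=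
          ENNReal.tsum_comm
      _ = ∑' (n : ℕ) (k : ℕ) (m : ℕ),
          ENNReal.ofReal ((((n:ℝ)+1) * ((k:ℝ)+1) * ((m:ℝ)+(n:ℝ)+(k:ℝ)+3)^2)⁻¹) :=
          tsum_congr fun n => ENNReal.tsum_comm
      _ = ∑' (m : ℕ) (n : ℕ) (k : ℕ),
          ENNReal.ofReal ((((m:ℝ)+1) * ((n:ℝ)+1) * ((m:ℝ)+(n:ℝ)+(k:ℝ)+3)^2)⁻¹) := by
          refine tsum_congr fun m => tsum_congr fun n => tsum_congr fun k => ?_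
          congr 2
          ring
  rw [step1, perm2, perm3, U_eq_2MA]

noncomputable def Hreal (s : ℕ) : ℝ := ∑ j ∈ Finset.range s, ((j:ℝ)+1)⁻¹

lemma Hreal_nonneg (s : ℕ) : 0 ≤ Hreal s :=
  Finset.sum_nonneg fun j _ => by positivity

lemma trich (j m n : ℕ) (x : ℝ≥0∞) :
    (if j < m+n+1 then x else 0)
      = (if j < m then x else 0)
        + ((if j = m then x else 0) + (if m < j ∧ j < m+n+1 then x else 0)) := by
  by_cases h1 : j < m
  · rw [if_pos (by omega), if_pos h1, if_neg (by omega), if_neg (by omega)]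
    simp
  · by_cases h2 : j = m
    · rw [if_pos (by omega), if_neg h1, if_pos h2, if_neg (by omega)]
      simp
    · by_cases h3 : j < m+n+1
      · rw [if_pos h3, if_neg h1, if_neg h2, if_pos (by omega)]
        simp
      · rw [if_neg h3, if_neg h1, if_neg h2, if_neg (by omega)]
        simp

lemma T3_eq_other :
    T3 = ((MA + (Z22 + MA)) + Z31) + ((MA + (Z22 + MA)) + Z31) := by
  -- Step 1: sum the inner variable `k` by telescoping
  have inner : ∀ m n : ℕ, (∑' k : ℕ,
      ENNReal.ofReal ((((m:ℝ)+1) * ((n:ℝ)+1) * ((k:ℝ)+1) * ((m:ℝ)+(n:ℝ)+(k:ℝ)+3))⁻¹))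
      = ENNReal.ofReal (Hreal (m+n+2) *
          (((m:ℝ)+1) * ((n:ℝ)+1) * ((m:ℝ)+(n:ℝ)+2))⁻¹) := by
    intro m n
    have hs := (telescope (m+n+1)).mul_left ((((m:ℝ)+1) * ((n:ℝ)+1))⁻¹)
    have h1 := tsum_ofReal_hasSum (fun k => by positivity) hs
    calc (∑' k : ℕ,
        ENNReal.ofReal ((((m:ℝ)+1) * ((n:ℝ)+1) * ((k:ℝ)+1) * ((m:ℝ)+(n:ℝ)+(k:ℝ)+3))⁻¹))
        = ∑' k : ℕ, ENNReal.ofReal ((((m:ℝ)+1) * ((n:ℝ)+1))⁻¹ *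
            (((k:ℝ)+1) * ((k:ℝ)+((m+n+1 : ℕ):ℝ)+2))⁻¹) := by
          refine tsum_congr fun k => ?_
          congr 1
          rw [← mul_inv]
          congr 1
          push_cast
          ring
      _ = ENNReal.ofReal ((((m:ℝ)+1) * ((n:ℝ)+1))⁻¹ *
            ((∑ j ∈ Finset.range (m+n+1+1), ((j:ℝ)+1)⁻¹) / (((m+n+1 : ℕ):ℝ)+1))) := h1
      _ = ENNReal.ofReal (Hreal (m+n+2) * (((m:ℝ)+1) * ((n:ℝ)+1) * ((m:ℝ)+(n:ℝ)+2))⁻¹) := by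
          congr 1
          rw [show Hreal (m+n+2) = ∑ j ∈ Finset.range (m+n+1+1), ((j:ℝ)+1)⁻¹ from rfl]
          simp only [mul_inv, div_eq_mul_inv]
          push_cast
          ring
  have step1 : T3 = ∑' (m : ℕ) (n : ℕ),
      ENNReal.ofReal (Hreal (m+n+2) * (((m:ℝ)+1) * ((n:ℝ)+1) * ((m:ℝ)+(n:ℝ)+2))⁻¹) := by
    rw [T3]
    exact tsum_congr fun m => tsum_congr fun n => inner m n
  -- Step 2: split `1/((m+1)(n+1)s)` into two symmetric halves
  have step2 : T3 = (∑' (m : ℕ) (n : ℕ),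
      ENNReal.ofReal (Hreal (m+n+2) * (((m:ℝ)+1) * ((m:ℝ)+(n:ℝ)+2)^2)⁻¹))
      + ∑' (m : ℕ) (n : ℕ),
      ENNReal.ofReal (Hreal (m+n+2) * (((n:ℝ)+1) * ((m:ℝ)+(n:ℝ)+2)^2)⁻¹) := by
    rw [step1, ← tsum2_add]
    refine tsum_congr fun m => tsum_congr fun n => ?_
    rw [← ENNReal.ofReal_add (mul_nonneg (Hreal_nonneg _) (by positivity))
      (mul_nonneg (Hreal_nonneg _) (by positivity))]
    congr 1
    have h1 : ((m:ℝ)+1) ≠ 0 := by positivity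
    have h2 : ((n:ℝ)+1) ≠ 0 := by positivity
    have h3 : ((m:ℝ)+(n:ℝ)+2) ≠ 0 := by positivity
    rw [← mul_add]
    congr 1
    field_simp
    ring
  have sym : (∑' (m : ℕ) (n : ℕ),
      ENNReal.ofReal (Hreal (m+n+2) * (((n:ℝ)+1) * ((m:ℝ)+(n:ℝ)+2)^2)⁻¹))
      = ∑' (m : ℕ) (n : ℕ),
      ENNReal.ofReal (Hreal (m+n+2) * (((m:ℝ)+1) * ((m:ℝ)+(n:ℝ)+2)^2)⁻¹) := by
    rw [ENNReal.tsum_comm]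
    refine tsum_congr fun n => tsum_congr fun m => ?_
    rw [show m+n+2 = n+m+2 from by omega]
    congr 1
    ring
  -- Step 3: peel off the last harmonic term
  have peel : ∀ m n : ℕ,
      ENNReal.ofReal (Hreal (m+n+2) * (((m:ℝ)+1) * ((m:ℝ)+(n:ℝ)+2)^2)⁻¹)
      = ENNReal.ofReal (Hreal (m+n+1) * (((m:ℝ)+1) * ((m:ℝ)+(n:ℝ)+2)^2)⁻¹)
        + ENNReal.ofReal ((((m:ℝ)+1) * ((m:ℝ)+(n:ℝ)+2)^3)⁻¹) := by
    intro m n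
    rw [← ENNReal.ofReal_add (mul_nonneg (Hreal_nonneg _) (by positivity)) (by positivity)]
    congr 1
    have hH : Hreal (m+n+2) = Hreal (m+n+1) + (((m+n+1 : ℕ):ℝ)+1)⁻¹ := by
      rw [show Hreal (m+n+2) = ∑ j ∈ Finset.range ((m+n+1)+1), ((j:ℝ)+1)⁻¹ from rfl,
        Finset.sum_range_succ]
      rfl
    rw [hH, add_mul]
    congr 1
    rw [← mul_inv]
    push_cast
    ring
  set C : ℝ≥0∞ := ∑' (m : ℕ) (n : ℕ),
      ENNReal.ofReal (Hreal (m+n+1) * (((m:ℝ)+1) * ((m:ℝ)+(n:ℝ)+2)^2)⁻¹) with hC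
  have step3 : T3 = (C + Z31) + (C + Z31) := by
    rw [step2, sym]
    congr 1 <;>
    · rw [hC, Z31, ← tsum2_add]
      exact tsum_congr fun m => tsum_congr fun n => peel m n
  -- Step 4: evaluate C
  have hCval : C = MA + (Z22 + MA) := by
    have expand : ∀ m n : ℕ,
        ENNReal.ofReal (Hreal (m+n+1) * (((m:ℝ)+1) * ((m:ℝ)+(n:ℝ)+2)^2)⁻¹)
        = ∑' j : ℕ, (if j < m+n+1 then
            ENNReal.ofReal (((j:ℝ)+1)⁻¹ * (((m:ℝ)+1) * ((m:ℝ)+(n:ℝ)+2)^2)⁻¹) else 0) := by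
      intro m n
      rw [tsum_eq_sum (s := Finset.range (m+n+1))
        (fun j hj => by rw [if_neg (by simpa using hj)])]
      rw [show Hreal (m+n+1) = ∑ j ∈ Finset.range (m+n+1), ((j:ℝ)+1)⁻¹ from rfl,
        Finset.sum_mul, ENNReal.ofReal_sum_of_nonneg (fun j _ => by positivity)]
      exact Finset.sum_congr rfl fun j hj => (if_pos (Finset.mem_range.mp hj)).symm
    have splitC : C = (∑' (m : ℕ) (n : ℕ) (j : ℕ), (if j < m then
          ENNReal.ofReal (((j:ℝ)+1)⁻¹ * (((m:ℝ)+1) * ((m:ℝ)+(n:ℝ)+2)^2)⁻¹) else 0))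
        + ((∑' (m : ℕ) (n : ℕ) (j : ℕ), (if j = m then
          ENNReal.ofReal (((j:ℝ)+1)⁻¹ * (((m:ℝ)+1) * ((m:ℝ)+(n:ℝ)+2)^2)⁻¹) else 0))
        + (∑' (m : ℕ) (n : ℕ) (j : ℕ), (if m < j ∧ j < m+n+1 then
          ENNReal.ofReal (((j:ℝ)+1)⁻¹ * (((m:ℝ)+1) * ((m:ℝ)+(n:ℝ)+2)^2)⁻¹) else 0))) := by
      rw [hC, ← tsum3_add, ← tsum3_add]
      refine tsum_congr fun m => tsum_congr fun n => ?_
      rw [expand m n]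
      exact tsum_congr fun j => trich j m n _
    have hC1 : (∑' (m : ℕ) (n : ℕ) (j : ℕ), (if j < m then
          ENNReal.ofReal (((j:ℝ)+1)⁻¹ * (((m:ℝ)+1) * ((m:ℝ)+(n:ℝ)+2)^2)⁻¹) else 0)) = MA := by
      calc (∑' (m : ℕ) (n : ℕ) (j : ℕ), (if j < m then
          ENNReal.ofReal (((j:ℝ)+1)⁻¹ * (((m:ℝ)+1) * ((m:ℝ)+(n:ℝ)+2)^2)⁻¹) else 0))
          = ∑' (m : ℕ) (j : ℕ), (if j < m then
              ∑' n : ℕ, ENNReal.ofReal (((j:ℝ)+1)⁻¹ *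
                (((m:ℝ)+1) * ((m:ℝ)+(n:ℝ)+2)^2)⁻¹) else 0) := by
            refine tsum_congr fun m => ?_
            rw [ENNReal.tsum_comm]
            exact tsum_congr fun j => tsum_ite_pull _
        _ = ∑' (j : ℕ) (m : ℕ), (if j < m then
              ∑' n : ℕ, ENNReal.ofReal (((j:ℝ)+1)⁻¹ *
                (((m:ℝ)+1) * ((m:ℝ)+(n:ℝ)+2)^2)⁻¹) else 0) := ENNReal.tsum_comm
        _ = ∑' (j : ℕ) (q : ℕ) (n : ℕ),
              ENNReal.ofReal (((j:ℝ)+1)⁻¹ *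
                ((((q+j+1 : ℕ):ℝ)+1) * (((q+j+1 : ℕ):ℝ)+(n:ℝ)+2)^2)⁻¹) := by
            refine tsum_congr fun j => ?_
            exact tsum_shift j _
        _ = MA := by
            rw [MA]
            refine tsum_congr fun j => tsum_congr fun q => tsum_congr fun n => ?_
            rw [← mul_inv]
            congr 1
            push_cast
            ring
    have hC2 : (∑' (m : ℕ) (n : ℕ) (j : ℕ), (if j = m then
          ENNReal.ofReal (((j:ℝ)+1)⁻¹ * (((m:ℝ)+1) * ((m:ℝ)+(n:ℝ)+2)^2)⁻¹) else 0)) = Z22 := by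
      rw [Z22]
      refine tsum_congr fun m => tsum_congr fun n => ?_
      have e1 : ∀ j : ℕ, (if j = m then
            ENNReal.ofReal (((j:ℝ)+1)⁻¹ * (((m:ℝ)+1) * ((m:ℝ)+(n:ℝ)+2)^2)⁻¹) else 0)
          = (if j = m then
            ENNReal.ofReal (((m:ℝ)+1)⁻¹ * (((m:ℝ)+1) * ((m:ℝ)+(n:ℝ)+2)^2)⁻¹) else 0) := by
        intro j
        by_cases h : j = m
        · rw [if_pos h, if_pos h, h]
        · rw [if_neg h, if_neg h]
      rw [tsum_congr e1, tsum_ite_eq m (fun _ : ℕ => ENNReal.ofReal (((m:ℝ)+1)⁻¹ *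
        (((m:ℝ)+1) * ((m:ℝ)+(n:ℝ)+2)^2)⁻¹))]
      rw [← mul_inv]
      congr 1
      ring
    have hC3 : (∑' (m : ℕ) (n : ℕ) (j : ℕ), (if m < j ∧ j < m+n+1 then
          ENNReal.ofReal (((j:ℝ)+1)⁻¹ * (((m:ℝ)+1) * ((m:ℝ)+(n:ℝ)+2)^2)⁻¹) else 0)) = MA := by
      calc (∑' (m : ℕ) (n : ℕ) (j : ℕ), (if m < j ∧ j < m+n+1 then
          ENNReal.ofReal (((j:ℝ)+1)⁻¹ * (((m:ℝ)+1) * ((m:ℝ)+(n:ℝ)+2)^2)⁻¹) else 0))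
          = ∑' (m : ℕ) (n : ℕ) (r : ℕ), (if r < n then
              ENNReal.ofReal ((((r+m+1 : ℕ):ℝ)+1)⁻¹ *
                (((m:ℝ)+1) * ((m:ℝ)+(n:ℝ)+2)^2)⁻¹) else 0) := by
            refine tsum_congr fun m => tsum_congr fun n => ?_
            have e2 : ∀ j : ℕ, (if m < j ∧ j < m+n+1 then
                ENNReal.ofReal (((j:ℝ)+1)⁻¹ * (((m:ℝ)+1) * ((m:ℝ)+(n:ℝ)+2)^2)⁻¹) else 0)
                = (if m < j then (if j < m+n+1 then
                  ENNReal.ofReal (((j:ℝ)+1)⁻¹ * (((m:ℝ)+1) * ((m:ℝ)+(n:ℝ)+2)^2)⁻¹)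
                  else 0) else 0) := by
              intro j
              by_cases h1 : m < j <;> by_cases h2 : j < m+n+1 <;> simp [h1, h2]
            rw [tsum_congr e2, tsum_shift m _]
            refine tsum_congr fun r => ?_
            by_cases h : r < n
            · rw [if_pos (by omega), if_pos h]
            · rw [if_neg (by omega), if_neg h]
        _ = ∑' (m : ℕ) (r : ℕ) (w : ℕ),
              ENNReal.ofReal ((((r+m+1 : ℕ):ℝ)+1)⁻¹ *
                (((m:ℝ)+1) * ((m:ℝ)+(((w+r+1 : ℕ):ℝ))+2)^2)⁻¹) := by
            refine tsum_congr fun m => ?_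
            rw [ENNReal.tsum_comm]
            refine tsum_congr fun r => ?_
            exact tsum_shift r _
        _ = MA := by
            rw [MA]
            refine tsum_congr fun m => tsum_congr fun r => tsum_congr fun w => ?_
            rw [← mul_inv]
            congr 1
            push_cast
            ring
    rw [splitC, hC1, hC2, hC3]
  rw [step3, hCval]

lemma MA_eq_Z4 : MA = Z4 := by
  have e1 := T3_eq_6MA
  have e2 := T3_eq_other
  have e3 := e1.symm.trans e2
  have hMA := MA_ne_top
  have hZ22 := Z22_ne_top
  have hZ31 := Z31_ne_top
  have hZ4 := Z4_ne_top
  have hMM : (MA + MA) ≠ ⊤ := ENNReal.add_ne_top.mpr ⟨hMA, hMA⟩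
  have h1 : (Z22 + MA) ≠ ⊤ := ENNReal.add_ne_top.mpr ⟨hZ22, hMA⟩
  have h2 : (MA + (Z22 + MA)) ≠ ⊤ := ENNReal.add_ne_top.mpr ⟨hMA, h1⟩
  have h3 : (MA + (Z22 + MA)) + Z31 ≠ ⊤ := ENNReal.add_ne_top.mpr ⟨h2, hZ31⟩
  have e4 := congrArg ENNReal.toReal e3
  rw [ENNReal.toReal_add hMM (ENNReal.add_ne_top.mpr ⟨hMM, hMM⟩),
    ENNReal.toReal_add hMM hMM, ENNReal.toReal_add hMA hMA,
    ENNReal.toReal_add h3 h3, ENNReal.toReal_add h2 hZ31,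
    ENNReal.toReal_add hMA h1, ENNReal.toReal_add hZ22 hMA] at e4
  have e5 := congrArg ENNReal.toReal Z_rel
  rw [ENNReal.toReal_add hZ22 hZ31] at e5
  refine (ENNReal.toReal_eq_toReal_iff' hMA hZ4).mp ?_
  linarith

noncomputable def G (x : ℕ × ℕ × ℕ) : ℝ≥0∞ :=
  ENNReal.ofReal (((x.1 : ℝ) * (x.2.1 : ℝ) * (x.2.2 : ℝ)^2)⁻¹)

noncomputable def greal (x : ℕ × ℕ × ℕ) : ℝ := ((x.1 : ℝ) * (x.2.1 : ℝ) * (x.2.2 : ℝ)^2)⁻¹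

lemma greal_nonneg (x : ℕ × ℕ × ℕ) : 0 ≤ greal x := by
  unfold greal
  positivity

lemma tsum_triple (F : ℕ × ℕ × ℕ → ℝ≥0∞) :
    ∑' x : ℕ × ℕ × ℕ, F x = ∑' (m : ℕ) (n : ℕ) (k : ℕ), F (m, n, k) := by
  rw [ENNReal.tsum_prod']
  exact tsum_congr fun m => ENNReal.tsum_prod'

lemma tsum_double (F : ℕ × ℕ → ℝ≥0∞) :
    ∑' x : ℕ × ℕ, F x = ∑' (m : ℕ) (n : ℕ), F (m, n) :=
  ENNReal.tsum_prod'

lemma cell_eval3 (S : Set (ℕ × ℕ × ℕ)) (ι : ℕ × ℕ × ℕ → ℕ × ℕ × ℕ)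
    (hinj : Function.Injective ι) (hmem : ∀ x, ι x ∈ S) (hcover : S ⊆ Set.range ι) :
    ∑' p : ℕ × ℕ × ℕ, Set.indicator S G p = ∑' x : ℕ × ℕ × ℕ, G (ι x) := by
  rw [← hinj.tsum_eq (f := Set.indicator S G)
    (subset_trans Set.support_indicator_subset hcover)]
  exact tsum_congr fun x => Set.indicator_of_mem (hmem x) G

lemma cell_eval2 (S : Set (ℕ × ℕ × ℕ)) (ι : ℕ × ℕ → ℕ × ℕ × ℕ)
    (hinj : Function.Injective ι) (hmem : ∀ x, ι x ∈ S) (hcover : S ⊆ Set.range ι) :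
    ∑' p : ℕ × ℕ × ℕ, Set.indicator S G p = ∑' x : ℕ × ℕ, G (ι x) := by
  rw [← hinj.tsum_eq (f := Set.indicator S G)
    (subset_trans Set.support_indicator_subset hcover)]
  exact tsum_congr fun x => Set.indicator_of_mem (hmem x) G

def SL : Set (ℕ × ℕ × ℕ) :=
  {p | 0 < p.1 ∧ 0 < p.2.1 ∧ 0 < p.2.2 ∧ p.1 ≤ p.2.1 ∧ p.2.1 ≤ p.2.2}

def SR : Set (ℕ × ℕ × ℕ) :=
  {p | 0 < p.1 ∧ 0 < p.2.1 ∧ 0 < p.2.2 ∧ p.1 < p.2.2 ∧ p.2.1 ≤ p.2.2}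

def L1 : Set (ℕ × ℕ × ℕ) := {p | 0 < p.1 ∧ p.1 ≤ p.2.1 ∧ p.2.1 < p.2.2}
def L2 : Set (ℕ × ℕ × ℕ) := {p | 0 < p.1 ∧ p.1 ≤ p.2.1 ∧ p.2.1 = p.2.2}
def R1 : Set (ℕ × ℕ × ℕ) := {p | 0 < p.1 ∧ p.1 < p.2.1 ∧ p.2.1 ≤ p.2.2}
def R2 : Set (ℕ × ℕ × ℕ) := {p | 0 < p.2.1 ∧ p.2.1 ≤ p.1 ∧ p.1 < p.2.2}

lemma L_split (p : ℕ × ℕ × ℕ) :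
    Set.indicator SL G p = Set.indicator L1 G p + Set.indicator L2 G p := by
  obtain ⟨a, b, c⟩ := p
  simp only [Set.indicator_apply, SL, L1, L2, Set.mem_setOf_eq]
  split_ifs with h1 h2 h3 <;> first
    | (exfalso; omega)
    | simp

lemma R_split (p : ℕ × ℕ × ℕ) :
    Set.indicator SR G p = Set.indicator R1 G p + Set.indicator R2 G p := by
  obtain ⟨a, b, c⟩ := p
  simp only [Set.indicator_apply, SR, R1, R2, Set.mem_setOf_eq]
  split_ifs with h1 h2 h3 <;> first
    | (exfalso; omega)
    | simp

lemma X1_eval : ∑' p : ℕ × ℕ × ℕ, Set.indicator L1 G p = Z22 + MA := by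
  have h := cell_eval3 L1 (fun x => (x.1+1, x.1+x.2.1+1, x.1+x.2.1+x.2.2+2))
    (by
      intro x y h
      simp only [Prod.mk.injEq] at h
      obtain ⟨h1, h2, h3⟩ := h
      exact Prod.ext (by omega) (Prod.ext (by omega) (by omega)))
    (by
      rintro ⟨a, b, c⟩
      simp only [L1, Set.mem_setOf_eq]
      omega)
    (by
      rintro ⟨a, b, c⟩ hp
      simp only [L1, Set.mem_setOf_eq] at hp
      exact ⟨(a-1, b-a, c-b-1), by simp only [Prod.mk.injEq]; omega⟩)
  rw [h, tsum_triple]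
  calc (∑' (m : ℕ) (n : ℕ) (k : ℕ), G (m+1, m+n+1, m+n+k+2))
      = ∑' (m : ℕ), ((∑' k : ℕ, G (m+1, m+0+1, m+0+k+2))
          + ∑' (n : ℕ) (k : ℕ), G (m+1, m+(n+1)+1, m+(n+1)+k+2)) := by
        refine tsum_congr fun m => ?_
        exact tsum_eq_zero_add' ENNReal.summable
    _ = (∑' (m : ℕ) (k : ℕ), G (m+1, m+0+1, m+0+k+2))
        + ∑' (m : ℕ) (n : ℕ) (k : ℕ), G (m+1, m+(n+1)+1, m+(n+1)+k+2) := ENNReal.tsum_add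
    _ = Z22 + MA := by
        congr 1
        · rw [Z22]
          refine tsum_congr fun m => tsum_congr fun k => ?_
          simp only [G]
          congr 1
          push_cast
          ring
        · rw [MA]
          refine tsum_congr fun m => tsum_congr fun n => tsum_congr fun k => ?_
          simp only [G]
          congr 1
          push_cast
          ring

lemma X2_eval : ∑' p : ℕ × ℕ × ℕ, Set.indicator L2 G p = Z4 + Z31 := by
  have h := cell_eval2 L2 (fun x => (x.1+1, x.1+x.2+1, x.1+x.2+1))
    (by
      intro x y h
      simp only [Prod.mk.injEq] at h
      obtain ⟨h1, h2, h3⟩ := h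
      exact Prod.ext (by omega) (by omega))
    (by
      rintro ⟨a, b⟩
      simp only [L2, Set.mem_setOf_eq]
      exact ⟨by omega, by omega, trivial⟩)
    (by
      rintro ⟨a, b, c⟩ hp
      simp only [L2, Set.mem_setOf_eq] at hp
      exact ⟨(a-1, b-a), by simp only [Prod.mk.injEq]; omega⟩)
  rw [h, tsum_double]
  calc (∑' (m : ℕ) (n : ℕ), G (m+1, m+n+1, m+n+1))
      = ∑' (m : ℕ), (G (m+1, m+0+1, m+0+1) + ∑' (n : ℕ), G (m+1, m+(n+1)+1, m+(n+1)+1)) := by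
        refine tsum_congr fun m => ?_
        exact tsum_eq_zero_add' ENNReal.summable
    _ = (∑' m : ℕ, G (m+1, m+0+1, m+0+1))
        + ∑' (m : ℕ) (n : ℕ), G (m+1, m+(n+1)+1, m+(n+1)+1) := ENNReal.tsum_add
    _ = Z4 + Z31 := by
        congr 1
        · rw [Z4]
          refine tsum_congr fun m => ?_
          simp only [G]
          congr 1
          push_cast
          ring
        · rw [Z31]
          refine tsum_congr fun m => tsum_congr fun n => ?_
          simp only [G]
          congr 1
          push_cast
          ring

lemma Y1_eval : ∑' p : ℕ × ℕ × ℕ, Set.indicator R1 G p = Z31 + MA := by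
  have h := cell_eval3 R1 (fun x => (x.1+1, x.1+x.2.1+2, x.1+x.2.1+x.2.2+2))
    (by
      intro x y h
      simp only [Prod.mk.injEq] at h
      obtain ⟨h1, h2, h3⟩ := h
      exact Prod.ext (by omega) (Prod.ext (by omega) (by omega)))
    (by
      rintro ⟨a, b, c⟩
      simp only [R1, Set.mem_setOf_eq]
      omega)
    (by
      rintro ⟨a, b, c⟩ hp
      simp only [R1, Set.mem_setOf_eq] at hp
      exact ⟨(a-1, b-a-1, c-b), by simp only [Prod.mk.injEq]; omega⟩)
  rw [h, tsum_triple]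
  calc (∑' (m : ℕ) (n : ℕ) (k : ℕ), G (m+1, m+n+2, m+n+k+2))
      = ∑' (m : ℕ) (n : ℕ), (G (m+1, m+n+2, m+n+0+2)
          + ∑' (k : ℕ), G (m+1, m+n+2, m+n+(k+1)+2)) := by
        refine tsum_congr fun m => tsum_congr fun n => ?_
        exact tsum_eq_zero_add' ENNReal.summable
    _ = (∑' (m : ℕ) (n : ℕ), G (m+1, m+n+2, m+n+0+2))
        + ∑' (m : ℕ) (n : ℕ) (k : ℕ), G (m+1, m+n+2, m+n+(k+1)+2) := tsum2_add
    _ = Z31 + MA := by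
        congr 1
        · rw [Z31]
          refine tsum_congr fun m => tsum_congr fun n => ?_
          simp only [G]
          congr 1
          push_cast
          ring
        · rw [MA]
          refine tsum_congr fun m => tsum_congr fun n => tsum_congr fun k => ?_
          simp only [G]
          congr 1
          push_cast
          ring

lemma Y2_eval : ∑' p : ℕ × ℕ × ℕ, Set.indicator R2 G p = Z22 + MA := by
  have h := cell_eval3 R2 (fun x => (x.1+x.2.1+1, x.1+1, x.1+x.2.1+x.2.2+2))
    (by
      intro x y h
      simp only [Prod.mk.injEq] at h
      obtain ⟨h1, h2, h3⟩ := h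
      exact Prod.ext (by omega) (Prod.ext (by omega) (by omega)))
    (by
      rintro ⟨a, b, c⟩
      simp only [R2, Set.mem_setOf_eq]
      omega)
    (by
      rintro ⟨a, b, c⟩ hp
      simp only [R2, Set.mem_setOf_eq] at hp
      exact ⟨(b-1, a-b, c-a-1), by simp only [Prod.mk.injEq]; omega⟩)
  rw [h, tsum_triple]
  calc (∑' (m : ℕ) (n : ℕ) (k : ℕ), G (m+n+1, m+1, m+n+k+2))
      = ∑' (m : ℕ), ((∑' k : ℕ, G (m+0+1, m+1, m+0+k+2))
          + ∑' (n : ℕ) (k : ℕ), G (m+(n+1)+1, m+1, m+(n+1)+k+2)) := by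
        refine tsum_congr fun m => ?_
        exact tsum_eq_zero_add' ENNReal.summable
    _ = (∑' (m : ℕ) (k : ℕ), G (m+0+1, m+1, m+0+k+2))
        + ∑' (m : ℕ) (n : ℕ) (k : ℕ), G (m+(n+1)+1, m+1, m+(n+1)+k+2) := ENNReal.tsum_add
    _ = Z22 + MA := by
        congr 1
        · rw [Z22]
          refine tsum_congr fun m => tsum_congr fun k => ?_
          simp only [G]
          congr 1
          push_cast
          ring
        · rw [MA]
          refine tsum_congr fun m => tsum_congr fun n => tsum_congr fun k => ?_
          simp only [G]
          congr 1
          push_cast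
          ring

lemma full_eq : ∑' p : ℕ × ℕ × ℕ, Set.indicator SL G p
    = ∑' p : ℕ × ℕ × ℕ, Set.indicator SR G p := by
  have hl : ∑' p : ℕ × ℕ × ℕ, Set.indicator SL G p = (Z22 + MA) + (Z4 + Z31) := by
    calc (∑' p : ℕ × ℕ × ℕ, Set.indicator SL G p)
        = ∑' p : ℕ × ℕ × ℕ, (Set.indicator L1 G p + Set.indicator L2 G p) :=
          tsum_congr L_split
      _ = (∑' p : ℕ × ℕ × ℕ, Set.indicator L1 G p)
          + ∑' p : ℕ × ℕ × ℕ, Set.indicator L2 G p := ENNReal.tsum_add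
      _ = (Z22 + MA) + (Z4 + Z31) := by rw [X1_eval, X2_eval]
  have hr : ∑' p : ℕ × ℕ × ℕ, Set.indicator SR G p = (Z31 + MA) + (Z22 + MA) := by
    calc (∑' p : ℕ × ℕ × ℕ, Set.indicator SR G p)
        = ∑' p : ℕ × ℕ × ℕ, (Set.indicator R1 G p + Set.indicator R2 G p) :=
          tsum_congr R_split
      _ = (∑' p : ℕ × ℕ × ℕ, Set.indicator R1 G p)
          + ∑' p : ℕ × ℕ × ℕ, Set.indicator R2 G p := ENNReal.tsum_add
      _ = (Z31 + MA) + (Z22 + MA) := by rw [Y1_eval, Y2_eval]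
  rw [hl, hr, MA_eq_Z4]
  ring

lemma subtype_eval (S : Set (ℕ × ℕ × ℕ)) :
    (∑' p : ↥S, greal p.1) = (∑' p : ℕ × ℕ × ℕ, Set.indicator S G p).toReal := by
  rw [tsum_subtype S greal]
  rw [ENNReal.tsum_toReal_eq (fun p => by
    by_cases h : p ∈ S
    · rw [Set.indicator_of_mem h]
      exact ENNReal.ofReal_ne_top
    · rw [Set.indicator_of_notMem h]
      exact ENNReal.zero_ne_top)]
  refine tsum_congr fun p => ?_
  by_cases h : p ∈ S
  · rw [Set.indicator_of_mem h, Set.indicator_of_mem h]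
    exact (ENNReal.toReal_ofReal (greal_nonneg p)).symm
  · rw [Set.indicator_of_notMem h, Set.indicator_of_notMem h]
    simp

end SchurAux

open SchurAux in
/-- `ζ*(1,1,2) = Σ_{a≤b≤c} 1/(a b c²)` equals the Schur multiple zeta value
`Σ_{a<c, b≤c} 1/(a b c²)` (duality `ζ(2↓1↓1) = ζ(1↑2↓1)`). -/
theorem schur_duality_example_1 :
    (∑' p : {p : ℕ × ℕ × ℕ //
        0 < p.1 ∧ 0 < p.2.1 ∧ 0 < p.2.2 ∧ p.1 ≤ p.2.1 ∧ p.2.1 ≤ p.2.2},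
        ((p.1.1 : ℝ) * (p.1.2.1 : ℝ) * (p.1.2.2 : ℝ) ^ 2)⁻¹)
      = ∑' p : {p : ℕ × ℕ × ℕ //
          0 < p.1 ∧ 0 < p.2.1 ∧ 0 < p.2.2 ∧ p.1 < p.2.2 ∧ p.2.1 ≤ p.2.2},
          ((p.1.1 : ℝ) * (p.1.2.1 : ℝ) * (p.1.2.2 : ℝ) ^ 2)⁻¹ := by
  have hl := subtype_eval SL
  have hr := subtype_eval SR
  calc (∑' p : {p : ℕ × ℕ × ℕ //
        0 < p.1 ∧ 0 < p.2.1 ∧ 0 < p.2.2 ∧ p.1 ≤ p.2.1 ∧ p.2.1 ≤ p.2.2},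
        ((p.1.1 : ℝ) * (p.1.2.1 : ℝ) * (p.1.2.2 : ℝ) ^ 2)⁻¹)
      = ∑' p : ↥SL, greal p.1 := rfl
    _ = (∑' p : ℕ × ℕ × ℕ, Set.indicator SL G p).toReal := hl
    _ = (∑' p : ℕ × ℕ × ℕ, Set.indicator SR G p).toReal := by rw [full_eq]
    _ = ∑' p : ↥SR, greal p.1 := hr.symm
    _ = _ := rfl
end

section
/- Let (X, ≤, δ) be a finite admissible 2-labeled poset. Let X′ = (X, ≤′, δ′) be the 2-labeled poset with the opposite order (p ≤′ q iff q ≤ p) and with labels swapped (δ′(p) = ∘ if δ(p) = •, and δ′(p) = • if δ(p) = ∘). Then X′ is again admissible and I(X) = I(X′). -/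
/-- The two labels `∘` and `•`. -/
inductive Lab : Type
  | circ | bullet
  deriving DecidableEq, Inhabited

/-- `ω_∘(t) = 1/t` and `ω_•(t) = 1/(1-t)` (the densities of the 1-forms `dt/t`, `dt/(1-t)`). -/
noncomputable def omegaFn : Lab → ℝ → ℝ
  | .circ => fun t => t⁻¹
  | .bullet => fun t => (1 - t)⁻¹

/-- Switching the two labels `∘ ↔ •`. -/
def Lab.flip : Lab → Lab
  | .circ => .bullet
  | .bullet => .circ

/-- The Yamamoto integral of a finite 2-labeled poset, for an arbitrary (strict-order)
relation `lt` on a finite index type: the integral of `∏_p ω_{δ(p)}(t_p)` over the tuples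
`(t_p) ∈ (0,1)^X` with `t_p < t_q` whenever `lt p q`. -/
noncomputable def yamI (ι : Type*) [Fintype ι] (lt : ι → ι → Prop) (δ : ι → Lab) : ℝ :=
  ∫ t : ι → ℝ in
    {t : ι → ℝ | (∀ p, t p ∈ Set.Ioo (0 : ℝ) 1) ∧ ∀ p q, lt p q → t p < t q},
    ∏ p, omegaFn (δ p) (t p)

lemma omegaFn_flip (l : Lab) (t : ℝ) : omegaFn (Lab.flip l) (1 - t) = omegaFn l t := by
  cases l <;> simp [omegaFn, Lab.flip]

/-- The reflection `t ↦ 1 - t` applied coordinatewise, as a measurable equivalence. -/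
def reflEquiv (ι : Type*) [Fintype ι] : (ι → ℝ) ≃ᵐ (ι → ℝ) where
  toFun t := fun p => 1 - t p
  invFun t := fun p => 1 - t p
  left_inv t := by funext p; ring
  right_inv t := by funext p; ring
  measurable_toFun := by
    exact measurable_pi_lambda _ fun p => (measurable_pi_apply p).const_sub 1
  measurable_invFun := by
    exact measurable_pi_lambda _ fun p => (measurable_pi_apply p).const_sub 1

lemma refl_measurePreserving (ι : Type*) [Fintype ι] :
    MeasureTheory.MeasurePreserving (fun t : ι → ℝ => fun p => 1 - t p) := by
  exact MeasureTheory.volume_preserving_pi fun _ =>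
    MeasureTheory.Measure.measurePreserving_sub_left MeasureTheory.volume 1

/-- **Duality for Yamamoto integrals.** If `(X,≤,δ)` is a finite admissible 2-labeled
poset (`δ p = ∘` for maximal `p`, `δ p = •` for minimal `p`), then the 2-labeled poset
`X'` with the opposite order and swapped labels is again admissible, and `I(X) = I(X')`. -/
theorem yamI_dual (ι : Type*) [Fintype ι] [PartialOrder ι] (δ : ι → Lab)
    (hmax : ∀ p : ι, (∀ q, ¬p < q) → δ p = Lab.circ)
    (hmin : ∀ p : ι, (∀ q, ¬q < p) → δ p = Lab.bullet) :
    ((∀ p : ι, (∀ q, ¬q < p) → Lab.flip (δ p) = Lab.circ) ∧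
      (∀ p : ι, (∀ q, ¬p < q) → Lab.flip (δ p) = Lab.bullet)) ∧
    yamI ι (fun p q => p < q) δ = yamI ι (fun p q => q < p) fun p => Lab.flip (δ p) := by
  refine ⟨⟨fun p h => by rw [hmin p h]; rfl, fun p h => by rw [hmax p h]; rfl⟩, ?_⟩
  have hmp := refl_measurePreserving ι
  have hemb : MeasurableEmbedding (fun t : ι → ℝ => fun p => 1 - t p) :=
    (reflEquiv ι).measurableEmbedding
  unfold yamI
  rw [← hmp.setIntegral_preimage_emb hemb
    (fun t => ∏ p, omegaFn (Lab.flip (δ p)) (t p))]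
  have hset : (fun t : ι → ℝ => fun p => 1 - t p) ⁻¹'
      {t : ι → ℝ | (∀ p, t p ∈ Set.Ioo (0 : ℝ) 1) ∧ ∀ p q, q < p → t p < t q} =
      {t : ι → ℝ | (∀ p, t p ∈ Set.Ioo (0 : ℝ) 1) ∧ ∀ p q, p < q → t p < t q} := by
    ext t
    simp only [Set.mem_preimage, Set.mem_setOf_eq, Set.mem_Ioo]
    constructor
    · rintro ⟨h1, h2⟩
      exact ⟨fun p => ⟨by linarith [(h1 p).2], by linarith [(h1 p).1]⟩,
        fun p q hpq => by linarith [h2 q p hpq]⟩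
    · rintro ⟨h1, h2⟩
      exact ⟨fun p => ⟨by linarith [(h1 p).2], by linarith [(h1 p).1]⟩,
        fun p q hpq => by linarith [h2 q p hpq]⟩
  rw [hset]
  apply MeasureTheory.setIntegral_congr_fun
  · simp only [Set.setOf_and, Set.setOf_forall]
    apply MeasurableSet.inter
    · exact MeasurableSet.iInter fun p =>
        (measurable_pi_apply p) measurableSet_Ioo
    · exact MeasurableSet.iInter fun p => MeasurableSet.iInter fun q =>
        MeasurableSet.iInter fun _ =>
          measurableSet_lt (measurable_pi_apply p) (measurable_pi_apply q)
  · intro t _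
    exact (Finset.prod_congr rfl fun p _ => omegaFn_flip (δ p) (t p)).symm
end
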